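/- arXiv:0902.0488 — 5 statements merged into one kernel-verified Lean document; each statement's English description precedes it below -/
import Mathlib

section
/- Let β be an arbitrary real number in (1, (1+√5)/2). Then there exists κ = κ(β) > 0, depending only on β, such that for every integer m ≥ 2 and every x ∈ (0, (m−1)/(β−1)) one has liminf_{n→∞} (1/n)·log₂ 𝒩_n(x;β) ≥ κ. -/
open MeasureTheory Filter Set

/-- Number of length-`n` prefixes of β-expansions of `x` with digits in `{0,…,m-1}`. -/
noncomputable def Nn (β : ℝ) (m n : ℕ) (x : ℝ) : ℕ :=
  Nat.card {w : Fin n → Fin m // ∃ ε : ℕ → Fin m,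
    (∀ k : Fin n, ε k = w k) ∧ x = ∑' k : ℕ, ((ε k : ℕ) : ℝ) / β ^ (k + 1)}

/-- β is a Pisot number. -/
def IsPisot (β : ℝ) : Prop :=
  1 < β ∧ ∃ p : Polynomial ℤ, p.Monic ∧ Polynomial.aeval β p = 0 ∧
    ∀ z : ℂ, Polynomial.aeval z p = 0 → z ≠ (β : ℂ) → ‖z‖ < 1

/-- μ_{β,m}: pushforward of the infinite product of uniform measures on `{0,…,m-1}`
under `(ε_k) ↦ Σ ε_k β^{-(k+1)}`, realized via the base-`m` digit sequence of a
Lebesgue-random point of `[0,1)`. -/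
noncomputable def mu (β : ℝ) (m : ℕ) : Measure ℝ :=
  Measure.map
    (fun x : ℝ => ∑' k : ℕ, ((⌊x * (m : ℝ) ^ (k + 1)⌋.toNat % m : ℕ) : ℝ) / β ^ (k + 1))
    (volume.restrict (Ico 0 1))

namespace BetaAux

variable (β : ℝ) {m : ℕ}

/-- remainder after applying digit list -/
def rem : List (Fin m) → ℝ → ℝ
  | [], x => x
  | d :: s, x => rem s (β * x - (d : ℕ))

variable (L : ℝ)

/-- admissible digit string: all remainders stay in [0, L] -/
def Good : List (Fin m) → ℝ → Prop
  | [], _ => True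
  | d :: s, x => 0 ≤ β * x - (d : ℕ) ∧ β * x - (d : ℕ) ≤ L ∧ Good s (β * x - (d : ℕ))

@[simp] lemma rem_nil (x : ℝ) : rem β ([] : List (Fin m)) x = x := rfl
@[simp] lemma rem_cons (d : Fin m) (s : List (Fin m)) (x : ℝ) :
    rem β (d :: s) x = rem β s (β * x - (d : ℕ)) := rfl
@[simp] lemma good_nil (x : ℝ) : Good β L ([] : List (Fin m)) x := trivial
@[simp] lemma good_cons (d : Fin m) (s : List (Fin m)) (x : ℝ) :
    Good β L (d :: s) x ↔
      0 ≤ β * x - (d : ℕ) ∧ β * x - (d : ℕ) ≤ L ∧ Good β L s (β * x - (d : ℕ)) := Iff.rfl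

lemma rem_append (s t : List (Fin m)) (x : ℝ) :
    rem β (s ++ t) x = rem β t (rem β s x) := by
  induction s generalizing x with
  | nil => rfl
  | cons d s ih => simp [ih]

lemma good_append (s t : List (Fin m)) (x : ℝ) :
    Good β L (s ++ t) x ↔ Good β L s x ∧ Good β L t (rem β s x) := by
  induction s generalizing x with
  | nil => simp
  | cons d s ih => simp [ih, and_assoc]

lemma rem_mem (s : List (Fin m)) (x : ℝ) (hx : x ∈ Icc 0 L) (hs : Good β L s x) :
    rem β s x ∈ Icc 0 L := by
  induction s generalizing x with
  | nil => exact hx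
  | cons d s ih => exact ih _ ⟨hs.1, hs.2.1⟩ hs.2.2

/-- partial sum identity -/
lemma sum_rem (hm : 0 < m) (hβ : 0 < β) (s : List (Fin m)) (x : ℝ) :
    x = (∑ k ∈ Finset.range s.length, ((s.getD k ⟨0, hm⟩ : ℕ) : ℝ) / β ^ (k + 1))
        + rem β s x / β ^ s.length := by
  induction s generalizing x with
  | nil => simp
  | cons d s ih =>
    have hβ' : (β : ℝ) ≠ 0 := ne_of_gt hβ
    have H := ih (β * x - (d : ℕ))
    simp only [List.length_cons, rem_cons]
    rw [Finset.sum_range_succ']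
    have : ∀ k, ((((d :: s).getD (k + 1) ⟨0, hm⟩ : Fin m) : ℕ) : ℝ) / β ^ (k + 1 + 1)
        = (1 / β) * (((s.getD k ⟨0, hm⟩ : ℕ) : ℝ) / β ^ (k + 1)) := by
      intro k
      simp only [List.getD_cons_succ]
      rw [pow_succ]
      ring
    rw [Finset.sum_congr rfl (fun k _ => this k)]
    rw [← Finset.mul_sum]
    simp only [List.getD_cons_zero]
    have hpow : β ^ (s.length + 1) = β ^ s.length * β := pow_succ β s.length
    rw [hpow]
    have key : x = ((d : ℕ) : ℝ) / β + (β * x - (d : ℕ)) / β := by field_simp; ring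
    calc x = ((d : ℕ) : ℝ) / β + (β * x - (d : ℕ)) / β := key
      _ = ((d : ℕ) : ℝ) / β + ((∑ k ∈ Finset.range s.length, ((s.getD k ⟨0, hm⟩ : ℕ) : ℝ) / β ^ (k + 1)) + rem β s (β * x - (d : ℕ)) / β ^ s.length) / β := by rw [← H]
      _ = 1 / β * (∑ k ∈ Finset.range s.length, ((s.getD k ⟨0, hm⟩ : ℕ) : ℝ) / β ^ (k + 1)) + ((d : ℕ) : ℝ) / β ^ (0 + 1) + rem β s (β * x - (d : ℕ)) / (β ^ s.length * β) := by ring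


section Greedy

variable {β L : ℝ} {m : ℕ}
variable (hβ1 : 1 < β) (hβ2 : β < 2) (hm2 : 2 ≤ m) (hL : (β - 1) * L = (m : ℝ) - 1)

lemma cast_m_sub_one (hm2 : 2 ≤ m) : ((m - 1 : ℕ) : ℝ) = (m : ℝ) - 1 := by
  have : 1 ≤ m := le_trans (by norm_num) hm2
  push_cast [Nat.cast_sub this]
  ring

include hβ1 hβ2 hm2 hL in
lemma one_lt_L : 1 < L := by
  have h1 : (0:ℝ) < β - 1 := by linarith
  have h2 : (2:ℝ) ≤ (m:ℝ) := by exact_mod_cast hm2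
  nlinarith

/-- the greedy digit -/
noncomputable def dig (β : ℝ) (m : ℕ) (y : ℝ) : ℕ := min (m - 1) ⌊β * y⌋₊

lemma dig_lt (hm2 : 2 ≤ m) (β y : ℝ) : dig β m y < m :=
  lt_of_le_of_lt (min_le_left _ _) (by omega)

include hβ1 hβ2 hm2 hL in
lemma dig_spec {y : ℝ} (hy : y ∈ Icc 0 L) :
    0 ≤ β * y - dig β m y ∧ β * y - dig β m y ≤ L := by
  have hβ0 : (0:ℝ) < β := by linarith
  have hy0 : 0 ≤ β * y := mul_nonneg (le_of_lt hβ0) hy.1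
  have hL1 : 1 < L := one_lt_L hβ1 hβ2 hm2 hL
  have hcast : ((m - 1 : ℕ) : ℝ) = (m : ℝ) - 1 := cast_m_sub_one hm2
  rcases le_or_gt ⌊β * y⌋₊ (m - 1) with h | h
  · have hd : dig β m y = ⌊β * y⌋₊ := min_eq_right h
    rw [hd]
    constructor
    · have := Nat.floor_le hy0
      linarith
    · have := Nat.lt_floor_add_one (β * y)
      linarith
  · have hd : dig β m y = m - 1 := min_eq_left (le_of_lt h)
    rw [hd, hcast]
    have hmle : (m : ℝ) ≤ ⌊β * y⌋₊ := by
      have : m ≤ ⌊β * y⌋₊ := by omega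
      exact_mod_cast this
    have hfl : ((⌊β * y⌋₊ : ℕ) : ℝ) ≤ β * y := Nat.floor_le hy0
    constructor
    · linarith
    · have hyL : β * y ≤ β * L := by nlinarith [hy.2]
      nlinarith

include hβ1 hβ2 hm2 hL in
lemma exists_good_list (n : ℕ) : ∀ y ∈ Icc 0 L, ∃ l : List (Fin m), l.length = n ∧ Good β L l y := by
  induction n with
  | zero => exact fun y _ => ⟨[], rfl, trivial⟩
  | succ n ih =>
    intro y hy
    obtain ⟨h0, h1⟩ := dig_spec hβ1 hβ2 hm2 hL hy
    obtain ⟨l, hl, hg⟩ := ih (β * y - dig β m y) ⟨h0, h1⟩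
    exact ⟨⟨dig β m y, dig_lt hm2 β y⟩ :: l, by simp [hl], ⟨h0, h1, hg⟩⟩

/-- greedy remainder sequence -/
noncomputable def grem (β : ℝ) (m : ℕ) (y : ℝ) : ℕ → ℝ
  | 0 => y
  | k + 1 => β * grem β m y k - dig β m (grem β m y k)

include hβ1 hβ2 hm2 hL in
lemma grem_mem {y : ℝ} (hy : y ∈ Icc 0 L) : ∀ k, grem β m y k ∈ Icc 0 L := by
  intro k
  induction k with
  | zero => exact hy
  | succ k ih => exact dig_spec hβ1 hβ2 hm2 hL ih

lemma grem_partial {β : ℝ} (hβ0 : β ≠ 0) (m : ℕ) (y : ℝ) (n : ℕ) :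
    y = (∑ k ∈ Finset.range n, ((dig β m (grem β m y k) : ℕ) : ℝ) / β ^ (k + 1))
        + grem β m y n / β ^ n := by
  induction n with
  | zero => simp [grem]
  | succ n ih =>
    rw [Finset.sum_range_succ]
    have : grem β m y (n + 1) = β * grem β m y n - dig β m (grem β m y n) := rfl
    rw [this, pow_succ]
    nth_rewrite 1 [ih]
    field_simp
    ring

include hβ1 in
lemma summable_digits {m : ℕ} (ε : ℕ → Fin m) :
    Summable (fun k : ℕ => ((ε k : ℕ) : ℝ) / β ^ (k + 1)) := by
  have hβ0 : (0:ℝ) < β := by linarith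
  have h1β : 1 / β < 1 := by
    rw [div_lt_one hβ0]; linarith
  have h1β0 : (0:ℝ) ≤ 1 / β := by positivity
  have hg : Summable (fun k : ℕ => (m : ℝ) * (1 / β) ^ k) :=
    (summable_geometric_of_lt_one h1β0 h1β).mul_left _
  refine Summable.of_nonneg_of_le (fun k => by positivity) (fun k => ?_) hg
  have hbk : (0:ℝ) < β ^ (k + 1) := by positivity
  have h2 : ((ε k : ℕ) : ℝ) ≤ (m : ℝ) := by
    have := (ε k).isLt
    exact_mod_cast le_of_lt this
  have h3 : β ^ k ≤ β ^ (k + 1) := by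
    have : (1:ℝ) ≤ β := le_of_lt hβ1
    calc β ^ k = β ^ k * 1 := by ring
      _ ≤ β ^ k * β := by nlinarith [pow_pos hβ0 k]
      _ = β ^ (k + 1) := (pow_succ β k).symm
  rw [div_le_iff₀ hbk]
  have : (m:ℝ) * (1/β)^k * β^(k+1) = (m:ℝ) * (β^(k+1) / β^k) := by
    rw [one_div, inv_pow]
    field_simp
  rw [this]
  have h4 : (1:ℝ) ≤ β^(k+1)/β^k := by
    rw [le_div_iff₀ (by positivity)]
    linarith
  nlinarith [Nat.cast_nonneg (α := ℝ) m]

end Greedy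

section Expansion

variable {β L : ℝ} {m : ℕ}
variable (hβ1 : 1 < β) (hβ2 : β < 2) (hm2 : 2 ≤ m) (hL : (β - 1) * L = (m : ℝ) - 1)

include hβ1 hβ2 hm2 hL in
lemma exists_expansion {y : ℝ} (hy : y ∈ Icc 0 L) :
    ∃ ε : ℕ → Fin m, y = ∑' k : ℕ, ((ε k : ℕ) : ℝ) / β ^ (k + 1) := by
  have hβ0 : (0:ℝ) < β := by linarith
  refine ⟨fun k => ⟨dig β m (grem β m y k), dig_lt hm2 _ _⟩, ?_⟩
  set f : ℕ → ℝ := fun k => ((dig β m (grem β m y k) : ℕ) : ℝ) / β ^ (k + 1) with hf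
  have hsum : Summable f := summable_digits hβ1 (fun k => ⟨dig β m (grem β m y k), dig_lt hm2 _ _⟩)
  have hmem : ∀ n, grem β m y n ∈ Icc 0 L := grem_mem hβ1 hβ2 hm2 hL hy
  have h1β : 1 / β < 1 := by rw [div_lt_one hβ0]; linarith
  have h1β0 : (0:ℝ) ≤ 1 / β := by positivity
  have hgeom : Tendsto (fun n : ℕ => L * (1/β) ^ n) atTop (nhds 0) := by
    have := (tendsto_pow_atTop_nhds_zero_of_lt_one h1β0 h1β).const_mul L
    simpa using this
  have hlim : Tendsto (fun n => grem β m y n / β ^ n) atTop (nhds 0) := by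
    refine squeeze_zero (fun n => div_nonneg (hmem n).1 (by positivity)) (fun n => ?_) hgeom
    rw [one_div, inv_pow, ← div_eq_mul_inv]
    exact div_le_div_of_nonneg_right (hmem n).2 (by positivity) |>.trans_eq rfl
  have hps : ∀ n, ∑ k ∈ Finset.range n, f k = y - grem β m y n / β ^ n := by
    intro n
    have := grem_partial (β := β) (ne_of_gt hβ0) m y n
    rw [hf]
    linarith
  have hT : Tendsto (fun n => ∑ k ∈ Finset.range n, f k) atTop (nhds y) := by
    rw [funext hps]
    simpa using tendsto_const_nhds.sub hlim
  exact ((hsum.hasSum_iff_tendsto_nat).2 hT).tsum_eq.symm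

end Expansion

section Count

variable {m : ℕ}

/-- generic finiteness of subtypes of bounded-length lists -/
lemma finite_list_subtype (n : ℕ) (P : List (Fin m) → Prop) :
    Finite {l : List (Fin m) // l.length = n ∧ P l} := by
  refine Finite.of_injective
    (fun l => (fun i : Fin n => l.1.get ⟨i, by rw [l.2.1]; exact i.isLt⟩)) ?_
  rintro ⟨l₁, h₁, _⟩ ⟨l₂, h₂, _⟩ h
  ext1
  refine List.ext_get (by rw [h₁, h₂]) ?_
  intro i hi₁ hi₂
  have := congrFun h ⟨i, by rw [← h₁]; exact hi₁⟩
  simpa using this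

/-- the number of admissible digit strings of length `n` starting from `x` -/
noncomputable def B (β L : ℝ) (m : ℕ) (n : ℕ) (x : ℝ) : ℕ :=
  Nat.card {l : List (Fin m) // l.length = n ∧ Good β L l x}

variable {β L : ℝ}

lemma one_le_B (hβ1 : 1 < β) (hβ2 : β < 2) (hm2 : 2 ≤ m) (hL : (β - 1) * L = (m : ℝ) - 1)
    {x : ℝ} (hx : x ∈ Icc 0 L) (n : ℕ) : 1 ≤ B β L m n x := by
  have : Finite {l : List (Fin m) // l.length = n ∧ Good β L l x} := finite_list_subtype n _
  obtain ⟨l, hl, hg⟩ := exists_good_list hβ1 hβ2 hm2 hL n x hx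
  have : Nonempty {l : List (Fin m) // l.length = n ∧ Good β L l x} := ⟨⟨l, hl, hg⟩⟩
  exact Nat.one_le_iff_ne_zero.mpr (Nat.card_ne_zero.mpr ⟨this, ‹_›⟩)

lemma B_path {s : List (Fin m)} {x : ℝ} (hs : Good β L s x) (n : ℕ) :
    B β L m n (rem β s x) ≤ B β L m (s.length + n) x := by
  have : Finite {l : List (Fin m) // l.length = s.length + n ∧ Good β L l x} :=
    finite_list_subtype _ _
  refine Nat.card_le_card_of_injective
    (fun l => ⟨s ++ l.1, by simp [l.2.1], by
      rw [good_append]; exact ⟨hs, l.2.2⟩⟩) ?_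
  rintro ⟨l₁, _, _⟩ ⟨l₂, _, _⟩ h
  ext1
  have := congrArg Subtype.val h
  simpa using this

lemma B_branch {d₀ d₁ : Fin m} {x : ℝ} (hne : d₀ ≠ d₁)
    (h₀ : 0 ≤ β * x - (d₀ : ℕ) ∧ β * x - (d₀ : ℕ) ≤ L)
    (h₁ : 0 ≤ β * x - (d₁ : ℕ) ∧ β * x - (d₁ : ℕ) ≤ L) (n : ℕ) :
    B β L m n (β * x - (d₀ : ℕ)) + B β L m n (β * x - (d₁ : ℕ)) ≤ B β L m (n + 1) x := by
  have F0 : Finite {l : List (Fin m) // l.length = n ∧ Good β L l (β * x - (d₀ : ℕ))} :=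
    finite_list_subtype _ _
  have F1 : Finite {l : List (Fin m) // l.length = n ∧ Good β L l (β * x - (d₁ : ℕ))} :=
    finite_list_subtype _ _
  have F : Finite {l : List (Fin m) // l.length = n + 1 ∧ Good β L l x} :=
    finite_list_subtype _ _
  show Nat.card _ + Nat.card _ ≤ Nat.card _
  rw [← Nat.card_sum]
  refine Nat.card_le_card_of_injective
    (fun l => Sum.elim
      (fun l : {l : List (Fin m) // l.length = n ∧ Good β L l (β * x - (d₀ : ℕ))} =>
        (⟨d₀ :: l.1, by simp [l.2.1], ⟨h₀.1, h₀.2, l.2.2⟩⟩ :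
          {l : List (Fin m) // l.length = n + 1 ∧ Good β L l x}))
      (fun l => ⟨d₁ :: l.1, by simp [l.2.1], ⟨h₁.1, h₁.2, l.2.2⟩⟩) l) ?_
  rintro (⟨l₁, _, _⟩ | ⟨l₁, _, _⟩) (⟨l₂, _, _⟩ | ⟨l₂, _, _⟩) h <;>
    · have := congrArg Subtype.val h
      simp at this
      first
        | (exact absurd this.1 hne)
        | (exact absurd this.1 hne.symm)
        | (congr 1; exact Subtype.ext this)
        | (congr 1; exact Subtype.ext this.2)

end Count

section Dynamics

variable {β L a b c δ : ℝ} {m K₁ J : ℕ}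
variable (hβ1 : 1 < β) (hβg : β ^ 2 < β + 1) (hm2 : 2 ≤ m)
  (hL : (β - 1) * L = (m : ℝ) - 1)
  (ha1 : 1 < β * a) (hab : β * a ≤ b) (hbb : β * (β - 1) * b < 1)
  (hc : c = min (β * a - 1) (β - 1)) (hδ : δ = 1 - (β - 1) * β * b)
  (hK₁ : a ≤ β ^ K₁ * c) (hJ : β * b ≤ b + J * δ)

include hβ1 hβg in
lemma beta_lt_two' : β < 2 := by nlinarith

include hβ1 hβg hm2 hL ha1 hab hbb in
lemma b_le_L : b ≤ L := by
  have h2 : (2:ℝ) ≤ (m:ℝ) := by exact_mod_cast hm2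
  have hb0 : 0 < b := by nlinarith
  have h3 : (β - 1) * b < 1 := by nlinarith
  have h4 : 1 ≤ (β - 1) * L := by rw [hL]; linarith
  by_contra hcon
  push_neg at hcon
  have := mul_lt_mul_of_pos_left hcon (show (0:ℝ) < β - 1 by linarith)
  linarith

include hβ1 ha1 hab in
lemma a_pos : 0 < a := by nlinarith

include hβ1 ha1 hab in
lemma one_lt_b : 1 < b := by nlinarith

include hβ1 ha1 hab in
lemma a_le_b : a ≤ b := by nlinarith

include hβ1 ha1 hc in
lemma c_pos : 0 < c := by
  rw [hc]; rcases min_cases (β * a - 1) (β - 1) with ⟨h, _⟩ | ⟨h, _⟩ <;> linarith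

include hβ1 hbb hδ in
lemma δ_pos : 0 < δ := by rw [hδ]; nlinarith

include hβ1 hβg hm2 hL ha1 hab hbb in
lemma up_lemma : ∀ j : ℕ, ∀ y : ℝ, 0 ≤ y → y ≤ b → a ≤ β ^ j * y →
    ∃ s : List (Fin m), s.length ≤ j ∧ Good β L s y ∧ rem β s y ∈ Icc a b := by
  have hbL : b ≤ L := b_le_L hβ1 hβg hm2 hL ha1 hab hbb
  intro j
  induction j with
  | zero =>
    intro y hy0 hyb hpow
    rw [pow_zero, one_mul] at hpow
    exact ⟨[], by simp, trivial, hpow, hyb⟩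
  | succ j ih =>
    intro y hy0 hyb hpow
    rcases le_or_gt a y with h | h
    · exact ⟨[], by simp, trivial, h, hyb⟩
    · set e0 : Fin m := ⟨0, by omega⟩ with he0
      have hc0 : ((e0 : ℕ) : ℝ) = 0 := by simp [he0]
      have hadm1 : 0 ≤ β * y := by nlinarith
      have hadm2 : β * y ≤ L := by nlinarith
      obtain ⟨s, hlen, hgood, hmem⟩ := ih (β * y) hadm1 (by nlinarith)
        (by rw [pow_succ] at hpow; nlinarith [pow_pos (by linarith : (0:ℝ) < β) j])
      refine ⟨e0 :: s, by simpa using hlen, ?_, ?_⟩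
      · rw [good_cons, hc0]
        exact ⟨by linarith, by linarith, by simpa using hgood⟩
      · rw [rem_cons, hc0]
        simpa using hmem

include hβ1 hβg hm2 hL ha1 hab hbb hc hδ hK₁ in
lemma down_lemma : ∀ j : ℕ, ∀ y : ℝ, c ≤ y → y ≤ β * b → y ≤ b + j * δ →
    ∃ s : List (Fin m), s.length ≤ j + K₁ ∧ Good β L s y ∧ rem β s y ∈ Icc a b := by
  have hbL : b ≤ L := b_le_L hβ1 hβg hm2 hL ha1 hab hbb
  have hb1 : 1 < b := one_lt_b hβ1 ha1 hab
  have hc0 : 0 < c := c_pos hβ1 ha1 hc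
  have hδ0 : 0 < δ := δ_pos hβ1 hbb hδ
  have hLinv : (β - 1) * L ≥ 1 := by
    have h2 : (2:ℝ) ≤ (m:ℝ) := by exact_mod_cast hm2
    rw [hL]; linarith
  intro j
  induction j with
  | zero =>
    intro y hcy hyβb hyb
    simp only [Nat.cast_zero, zero_mul, add_zero] at hyb
    have hK₁' : a ≤ β ^ K₁ * y := by
      have : β ^ K₁ * c ≤ β ^ K₁ * y :=
        mul_le_mul_of_nonneg_left hcy (le_of_lt (pow_pos (by linarith) K₁))
      linarith
    obtain ⟨s, h1, h2, h3⟩ := up_lemma hβ1 hβg hm2 hL ha1 hab hbb K₁ y (by linarith) hyb hK₁'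
    exact ⟨s, by omega, h2, h3⟩
  | succ j ih =>
    intro y hcy hyβb hyb
    rcases le_or_gt y b with h | h
    · have hK₁' : a ≤ β ^ K₁ * y := by
        have : β ^ K₁ * c ≤ β ^ K₁ * y :=
          mul_le_mul_of_nonneg_left hcy (le_of_lt (pow_pos (by linarith) K₁))
        linarith
      obtain ⟨s, h1, h2, h3⟩ := up_lemma hβ1 hβg hm2 hL ha1 hab hbb K₁ y (by linarith) h hK₁'
      exact ⟨s, by omega, h2, h3⟩
    · set e1 : Fin m := ⟨1, by omega⟩ with he1
      have hc1 : ((e1 : ℕ) : ℝ) = 1 := by simp [he1]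
      set y' := β * y - 1 with hy'
      have hy'0 : 0 ≤ y' := by nlinarith
      have hy'L : y' ≤ L := by nlinarith
      have hstep : (β - 1) * y ≤ 1 - δ := by rw [hδ]; nlinarith
      have hy'c : c ≤ y' := by
        have : c ≤ β - 1 := by rw [hc]; exact min_le_right _ _
        nlinarith
      have hy'βb : y' ≤ β * b := by nlinarith
      have hy'b : y' ≤ b + j * δ := by
        have : y' ≤ y - δ := by simp only [hy']; nlinarith
        push_cast
        push_cast at hyb
        linarith
      obtain ⟨s, h1, h2, h3⟩ := ih y' hy'c hy'βb hy'b
      refine ⟨e1 :: s, by simp; omega, ?_, ?_⟩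
      · rw [good_cons, hc1]
        exact ⟨hy'0, hy'L, h2⟩
      · rw [rem_cons, hc1]
        exact h3

include hβ1 hβg hm2 hL ha1 hab hbb in
lemma downbig_lemma : ∀ j : ℕ, ∀ y : ℝ, b < y → y < L → L - b ≤ β ^ j * (L - y) →
    ∃ s : List (Fin m), Good β L s y ∧ 0 < rem β s y ∧ rem β s y ≤ b := by
  have hbL : b ≤ L := b_le_L hβ1 hβg hm2 hL ha1 hab hbb
  have hb1 : 1 < b := one_lt_b hβ1 ha1 hab
  have hcast : ((m - 1 : ℕ) : ℝ) = (m : ℝ) - 1 := cast_m_sub_one hm2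
  have hβL : β * L = L + ((m:ℝ) - 1) := by nlinarith
  intro j
  induction j with
  | zero =>
    intro y hby hyL hpow
    rw [pow_zero, one_mul] at hpow
    linarith
  | succ j ih =>
    intro y hby hyL hpow
    have hβ0 : (0:ℝ) < β := by linarith
    rcases le_or_gt (β * y - ((m:ℝ) - 1)) b with hcap | hcap
    · -- uncapped: one step into (b-1, b]
      set v := β * y - b with hv
      have hv0 : 0 < v := by nlinarith
      set d : ℕ := ⌈v⌉₊ with hd
      have hdm : d ≤ m - 1 := by
        rw [hd]
        refine Nat.ceil_le.mpr ?_
        rw [hcast]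
        linarith
      set e : Fin m := ⟨d, by omega⟩ with he
      have hce : ((e : ℕ) : ℝ) = (d : ℝ) := by simp [he]
      have hdv : v ≤ (d : ℝ) := Nat.le_ceil v
      have hdv2 : (d : ℝ) < v + 1 := Nat.ceil_lt_add_one (le_of_lt hv0)
      refine ⟨[e], ?_, ?_, ?_⟩
      · rw [good_cons, hce]
        refine ⟨by nlinarith, by nlinarith, trivial⟩
      · show 0 < β * y - ((e : ℕ) : ℝ)
        rw [hce]; nlinarith
      · show β * y - ((e : ℕ) : ℝ) ≤ b
        rw [hce]; nlinarith
    · -- capped: digit m-1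
      set em : Fin m := ⟨m - 1, by omega⟩ with hem
      have hcem : ((em : ℕ) : ℝ) = (m : ℝ) - 1 := by
        rw [hem]; exact_mod_cast hcast
      set u := β * y - ((m:ℝ) - 1) with hu
      have huL : L - u = β * (L - y) := by rw [hu]; linarith
      have huL' : u < L := by
        have := mul_pos hβ0 (sub_pos.mpr hyL)
        linarith
      obtain ⟨s, h1, h2, h3⟩ := ih u hcap huL' (by
        rw [huL, ← mul_assoc]
        rw [pow_succ] at hpow
        exact hpow)
      have hb1 : 1 < b := one_lt_b hβ1 ha1 hab
      refine ⟨em :: s, ?_, ?_, ?_⟩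
      · rw [good_cons, hcem]
        exact ⟨by linarith, by linarith, h1⟩
      · rw [rem_cons, hcem]; exact h2
      · rw [rem_cons, hcem]; exact h3

include hβ1 hβg hm2 hL ha1 hab hbb in
lemma transient_lemma {y : ℝ} (hy0 : 0 < y) (hyL : y < L) :
    ∃ s : List (Fin m), Good β L s y ∧ rem β s y ∈ Icc a b := by
  have ha0 : 0 < a := a_pos hβ1 ha1 hab
  rcases le_or_gt y b with h | h
  · obtain ⟨j, hj⟩ := pow_unbounded_of_one_lt (a / y) hβ1
    have : a ≤ β ^ j * y := by
      rw [div_lt_iff₀ hy0] at hj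
      linarith
    obtain ⟨s, _, h2, h3⟩ := up_lemma hβ1 hβg hm2 hL ha1 hab hbb j y (le_of_lt hy0) h this
    exact ⟨s, h2, h3⟩
  · obtain ⟨j, hj⟩ := pow_unbounded_of_one_lt ((L - b) / (L - y)) hβ1
    have : L - b ≤ β ^ j * (L - y) := by
      rw [div_lt_iff₀ (by linarith)] at hj
      linarith
    obtain ⟨s₁, hg₁, hr₁, hr₂⟩ := downbig_lemma hβ1 hβg hm2 hL ha1 hab hbb j y h hyL this
    set u := rem β s₁ y with huu
    obtain ⟨j', hj'⟩ := pow_unbounded_of_one_lt (a / u) hβ1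
    have hau : a ≤ β ^ j' * u := by
      rw [div_lt_iff₀ hr₁] at hj'
      linarith
    obtain ⟨s₂, _, hg₂, hm₂⟩ := up_lemma hβ1 hβg hm2 hL ha1 hab hbb j' u (le_of_lt hr₁) hr₂ hau
    refine ⟨s₁ ++ s₂, ?_, ?_⟩
    · rw [good_append]; exact ⟨hg₁, hg₂⟩
    · rw [rem_append]; exact hm₂

end Dynamics

section MainCount

variable {β L a b c δ : ℝ} {m K₁ J : ℕ}
variable (hβ1 : 1 < β) (hβg : β ^ 2 < β + 1) (hm2 : 2 ≤ m)
  (hL : (β - 1) * L = (m : ℝ) - 1)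
  (ha1 : 1 < β * a) (hab : β * a ≤ b) (hbb : β * (β - 1) * b < 1)
  (hc : c = min (β * a - 1) (β - 1)) (hδ : δ = 1 - (β - 1) * β * b)
  (hK₁ : a ≤ β ^ K₁ * c) (hJ : β * b ≤ b + J * δ)

include hβ1 hβg hm2 hL ha1 hab hbb in
lemma bb_le_L : β * b ≤ L := by
  have h2 : (2:ℝ) ≤ (m:ℝ) := by exact_mod_cast hm2
  have hb0 : 0 < b := by nlinarith
  have h4 : 1 ≤ (β - 1) * L := by rw [hL]; linarith
  by_contra hcon
  push_neg at hcon
  have := mul_lt_mul_of_pos_left hcon (show (0:ℝ) < β - 1 by linarith)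
  nlinarith

include hβ1 hβg hm2 hL ha1 hab hbb hc hδ hK₁ hJ in
lemma count_ge : ∀ n : ℕ, ∀ x ∈ Icc a b, 2 ^ (n / (J + K₁ + 1)) ≤ B β L m n x := by
  have hβ2 : β < 2 := beta_lt_two' hβ1 hβg
  have hβ0 : (0:ℝ) < β := by linarith
  have ha0 : 0 < a := a_pos hβ1 ha1 hab
  have hbL : b ≤ L := b_le_L hβ1 hβg hm2 hL ha1 hab hbb
  have hβbL : β * b ≤ L := bb_le_L hβ1 hβg hm2 hL ha1 hab hbb
  set K := J + K₁ + 1 with hK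
  have hK0 : 0 < K := by omega
  intro n
  induction n using Nat.strong_induction_on with
  | _ n ih =>
    intro x hx
    have hxIcc : x ∈ Icc 0 L := ⟨le_trans (le_of_lt ha0) hx.1, le_trans hx.2 hbL⟩
    rcases lt_or_ge n K with h | h
    · rw [Nat.div_eq_of_lt h, pow_zero]
      exact one_le_B hβ1 hβ2 hm2 hL hxIcc n
    · set e0 : Fin m := ⟨0, by omega⟩ with he0
      set e1 : Fin m := ⟨1, by omega⟩ with he1
      have hc0 : ((e0 : ℕ) : ℝ) = 0 := by simp [he0]
      have hc1 : ((e1 : ℕ) : ℝ) = 1 := by simp [he1]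
      have hne : e0 ≠ e1 := by
        intro hcon
        have := congrArg (fun t : Fin m => (t : ℕ)) hcon
        simp [he0, he1] at this
      have hβx1 : β * a ≤ β * x := mul_le_mul_of_nonneg_left hx.1 (le_of_lt hβ0)
      have hβx2 : β * x ≤ β * b := mul_le_mul_of_nonneg_left hx.2 (le_of_lt hβ0)
      have adm0 : 0 ≤ β * x - ((e0 : ℕ) : ℝ) ∧ β * x - ((e0 : ℕ) : ℝ) ≤ L := by
        rw [hc0]; constructor <;> linarith
      have adm1 : 0 ≤ β * x - ((e1 : ℕ) : ℝ) ∧ β * x - ((e1 : ℕ) : ℝ) ≤ L := by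
        rw [hc1]; constructor <;> linarith
      -- return strings
      have hcb : c ≤ β * a - 1 := by rw [hc]; exact min_le_left _ _
      obtain ⟨s₀, hlen₀, hg₀, hz₀⟩ :=
        down_lemma hβ1 hβg hm2 hL ha1 hab hbb hc hδ hK₁ J (β * x - ((e0 : ℕ) : ℝ))
          (by rw [hc0]; linarith) (by rw [hc0]; linarith) (by rw [hc0]; linarith)
      obtain ⟨s₁, hlen₁, hg₁, hz₁⟩ :=
        down_lemma hβ1 hβg hm2 hL ha1 hab hbb hc hδ hK₁ J (β * x - ((e1 : ℕ) : ℝ))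
          (by rw [hc1]; linarith) (by rw [hc1]; linarith) (by rw [hc1]; linarith)
      -- assemble
      have hn1 : (n - 1) + 1 = n := by omega
      have hbr := B_branch (β := β) (L := L) hne adm0 adm1 (n - 1)
      rw [hn1] at hbr
      have hstep : ∀ (sᵢ : List (Fin m)) (yᵢ : ℝ), sᵢ.length ≤ J + K₁ → Good β L sᵢ yᵢ →
          rem β sᵢ yᵢ ∈ Icc a b → 2 ^ (n / K - 1) ≤ B β L m (n - 1) yᵢ := by
        intro sᵢ yᵢ hlen hg hz
        have hlen' : sᵢ.length + (n - 1 - sᵢ.length) = n - 1 := by omega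
        have hpath := B_path hg (n - 1 - sᵢ.length)
        rw [hlen'] at hpath
        have hih := ih (n - 1 - sᵢ.length) (by omega) _ hz
        refine le_trans ?_ (le_trans hih hpath)
        apply pow_le_pow_right₀ (by norm_num)
        have h1 : n - K ≤ n - 1 - sᵢ.length := by omega
        have h2 : (n - K) / K = n / K - 1 := by
          rw [Nat.div_eq_sub_div hK0 h]
          exact (Nat.succ_sub_one _).symm
        calc n / K - 1 = (n - K) / K := h2.symm
          _ ≤ (n - 1 - sᵢ.length) / K := Nat.div_le_div_right h1
      have hB0 := hstep s₀ _ hlen₀ hg₀ hz₀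
      have hB1 := hstep s₁ _ hlen₁ hg₁ hz₁
      have h1K : 1 ≤ n / K := (Nat.one_le_div_iff hK0).mpr h
      have hpow2 : 2 ^ (n / K) = 2 ^ (n / K - 1) + 2 ^ (n / K - 1) := by
        have h5 : n / K = (n / K - 1) + 1 := by omega
        nth_rewrite 1 [h5]
        rw [pow_succ]
        ring
      rw [hpow2]
      calc 2 ^ (n / K - 1) + 2 ^ (n / K - 1)
          ≤ B β L m (n-1) (β * x - ((e0 : ℕ) : ℝ)) + B β L m (n-1) (β * x - ((e1 : ℕ) : ℝ)) :=
            Nat.add_le_add hB0 hB1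
        _ ≤ B β L m n x := hbr

end MainCount

section Bridge

variable {β L : ℝ} {m : ℕ}
variable (hβ1 : 1 < β) (hβ2 : β < 2) (hm2 : 2 ≤ m) (hL : (β - 1) * L = (m : ℝ) - 1)

include hβ1 hβ2 hm2 hL in
lemma Nn_ge {x : ℝ} (hx : x ∈ Icc 0 L) (n : ℕ) :
    B β L m n x ≤ Nat.card {w : Fin n → Fin m // ∃ ε : ℕ → Fin m,
      (∀ k : Fin n, ε k = w k) ∧ x = ∑' k : ℕ, ((ε k : ℕ) : ℝ) / β ^ (k + 1)} := by
  have hm0 : 0 < m := by omega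
  have hβ0 : (0:ℝ) < β := by linarith
  refine Nat.card_le_card_of_injective (fun l => ⟨fun i => l.1.get ⟨i, by rw [l.2.1]; exact i.isLt⟩, ?_⟩) ?_
  · -- existence of a full expansion extending l
    obtain ⟨l, hlen, hgood⟩ := l
    have hz : rem β l x ∈ Icc 0 L := rem_mem β L l x hx hgood
    obtain ⟨ε', hε'⟩ := exists_expansion hβ1 hβ2 hm2 hL hz
    refine ⟨fun k => if h : k < n then l.get ⟨k, by rw [hlen]; exact h⟩ else ε' (k - n), ?_, ?_⟩
    · intro k
      simp [k.isLt]
    · set f : ℕ → ℝ := fun k =>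
        (((if h : k < n then l.get ⟨k, by rw [hlen]; exact h⟩ else ε' (k - n) : Fin m) : ℕ) : ℝ)
          / β ^ (k + 1) with hf
      have hsum : Summable f :=
        summable_digits hβ1 (fun k => if h : k < n then l.get ⟨k, by rw [hlen]; exact h⟩ else ε' (k - n))
      have hsplit := hsum.sum_add_tsum_nat_add n
      have hpart : ∑ k ∈ Finset.range n, f k
          = ∑ k ∈ Finset.range n, ((l.getD k ⟨0, hm0⟩ : ℕ) : ℝ) / β ^ (k + 1) := by
        refine Finset.sum_congr rfl ?_
        intro k hk
        have hk' : k < n := Finset.mem_range.mp hk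
        have hk'' : k < l.length := by rw [hlen]; exact hk'
        rw [hf]
        simp only [dif_pos hk']
        rw [List.getD_eq_getElem l _ hk'']
        rfl
      have htail : ∑' k : ℕ, f (k + n) = (1 / β ^ n) * rem β l x := by
        have : ∀ k : ℕ, f (k + n) = (1 / β ^ n) * (((ε' k : ℕ) : ℝ) / β ^ (k + 1)) := by
          intro k
          rw [hf]
          simp only [dif_neg (by omega : ¬(k + n < n))]
          have h1 : k + n - n = k := by omega
          have h2 : k + n + 1 = (k + 1) + n := by omega
          rw [h1, h2, pow_add]
          ring
        rw [funext this, tsum_mul_left, ← hε']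
      have hsr := sum_rem β hm0 hβ0 l x
      rw [hlen] at hsr
      rw [← hsplit, hpart, htail]
      linear_combination hsr
  · rintro ⟨l₁, h₁, _⟩ ⟨l₂, h₂, _⟩ h
    ext1
    have := congrArg Subtype.val h
    refine List.ext_get (by rw [h₁, h₂]) ?_
    intro i hi₁ hi₂
    have := congrFun this ⟨i, by rw [← h₁]; exact hi₁⟩
    simpa using this

lemma Nn_le_pow (n : ℕ) (x : ℝ) :
    Nat.card {w : Fin n → Fin m // ∃ ε : ℕ → Fin m,
      (∀ k : Fin n, ε k = w k) ∧ x = ∑' k : ℕ, ((ε k : ℕ) : ℝ) / β ^ (k + 1)} ≤ m ^ n := by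
  have h1 : Nat.card {w : Fin n → Fin m // ∃ ε : ℕ → Fin m,
      (∀ k : Fin n, ε k = w k) ∧ x = ∑' k : ℕ, ((ε k : ℕ) : ℝ) / β ^ (k + 1)}
      ≤ Nat.card (Fin n → Fin m) :=
    Nat.card_le_card_of_injective _ Subtype.val_injective
  have h2 : Nat.card (Fin n → Fin m) = m ^ n := by
    simp [Nat.card_eq_fintype_card]
  exact h1.trans_eq h2

end Bridge

end BetaAux

open BetaAux in
theorem exponential_growth_small_beta' (β : ℝ) (hβ1 : 1 < β)
    (hβ2 : β < (1 + Real.sqrt 5) / 2) :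
    ∃ κ : ℝ, 0 < κ ∧ ∀ m : ℕ, 2 ≤ m → ∀ x : ℝ, x ∈ Ioo (0 : ℝ) ((m - 1) / (β - 1)) →
      κ ≤ atTop.liminf (fun n : ℕ => Real.logb 2 (Nat.card {w : Fin n → Fin m // ∃ ε : ℕ → Fin m,
        (∀ k : Fin n, ε k = w k) ∧ x = ∑' k : ℕ, ((ε k : ℕ) : ℝ) / β ^ (k + 1)}) / n) := by
  have hs : Real.sqrt 5 ^ 2 = 5 := Real.sq_sqrt (by norm_num)
  have hβg : β ^ 2 < β + 1 := by
    have h1 : 2 * β - 1 < Real.sqrt 5 := by linarith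
    have h2 : (2 * β - 1) ^ 2 < 5 := by nlinarith [Real.sqrt_nonneg 5]
    nlinarith
  have hβ0 : (0:ℝ) < β := by linarith
  have hβlt2 : β < 2 := by nlinarith
  have hββ1 : 0 < β * (β - 1) := by nlinarith
  have hββ1' : β * (β - 1) < 1 := by nlinarith
  set q := 1 / (β * (β - 1)) with hqdef
  have hq1 : 1 < q := by
    rw [hqdef]
    rw [lt_div_iff₀ hββ1]
    linarith
  set b := (1 + q) / 2 with hbdef
  have hb1 : 1 < b := by rw [hbdef]; linarith
  have hbq : b < q := by rw [hbdef]; linarith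
  set a := (1 + b) / (2 * β) with hadef
  have hba : β * a = (1 + b) / 2 := by rw [hadef]; field_simp
  have ha1 : 1 < β * a := by rw [hba]; linarith
  have hab : β * a ≤ b := by rw [hba]; linarith
  have hbb : β * (β - 1) * b < 1 := by
    have hq : β * (β - 1) * q = 1 := by rw [hqdef]; field_simp; exact div_self (sub_ne_zero.mpr (ne_of_gt hβ1))
    calc β * (β - 1) * b < β * (β - 1) * q := mul_lt_mul_of_pos_left hbq hββ1
      _ = 1 := hq
  set c := min (β * a - 1) (β - 1) with hcdef
  have hc0 : 0 < c := c_pos hβ1 ha1 hcdef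
  set δ := 1 - (β - 1) * β * b with hδdef
  have hδ0 : 0 < δ := δ_pos hβ1 hbb hδdef
  obtain ⟨K₁, hK₁'⟩ := pow_unbounded_of_one_lt (a / c) hβ1
  have hK₁ : a ≤ β ^ K₁ * c := by
    rw [div_lt_iff₀ hc0] at hK₁'
    linarith
  obtain ⟨J, hJ'⟩ := exists_nat_ge ((β * b - b) / δ)
  have hJ : β * b ≤ b + J * δ := by
    rw [div_le_iff₀ hδ0] at hJ'
    linarith
  set K := J + K₁ + 1 with hKdef
  have hK0 : 0 < K := by omega
  have hK0' : (0:ℝ) < K := by exact_mod_cast hK0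
  refine ⟨1 / (2 * K), by positivity, ?_⟩
  intro m hm2 x hx
  set L := ((m:ℝ) - 1) / (β - 1) with hLdef
  have hm2' : (2:ℝ) ≤ (m:ℝ) := by exact_mod_cast hm2
  have hβne : β - 1 ≠ 0 := by intro h; rw [sub_eq_zero] at h; exact absurd h.symm (ne_of_lt hβ1)
  have hL : (β - 1) * L = (m:ℝ) - 1 := by
    rw [hLdef]; field_simp
  obtain ⟨τ, hgτ, hzτ⟩ := transient_lemma (m := m) hβ1 hβg hm2 hL ha1 hab hbb hx.1 hx.2
  set T := τ.length with hTdef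
  set z := rem β τ x with hzdef
  have hxIcc : x ∈ Icc 0 L := ⟨le_of_lt hx.1, le_of_lt hx.2⟩
  have hlogm : (0:ℝ) ≤ Real.logb 2 m := Real.logb_nonneg one_lt_two (by linarith)
  have hcob : IsCoboundedUnder (· ≥ ·) atTop
      (fun n : ℕ => Real.logb 2 (Nat.card {w : Fin n → Fin m // ∃ ε : ℕ → Fin m,
        (∀ k : Fin n, ε k = w k) ∧ x = ∑' k : ℕ, ((ε k : ℕ) : ℝ) / β ^ (k + 1)}) / n) := by
    apply isCoboundedUnder_ge_of_eventually_le atTop (x := Real.logb 2 m)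
    rw [eventually_atTop]
    refine ⟨1, fun n hn => ?_⟩
    have hn0 : (0:ℝ) < n := by exact_mod_cast hn
    set N := Nat.card {w : Fin n → Fin m // ∃ ε : ℕ → Fin m,
      (∀ k : Fin n, ε k = w k) ∧ x = ∑' k : ℕ, ((ε k : ℕ) : ℝ) / β ^ (k + 1)} with hNdef
    have hNle : N ≤ m ^ n := Nn_le_pow n x
    have hlog : Real.logb 2 N ≤ (n : ℝ) * Real.logb 2 m := by
      rcases Nat.eq_zero_or_pos N with h0 | h0
      · rw [h0]
        simp only [Nat.cast_zero, Real.logb_zero]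
        positivity
      · have hNpos : (0:ℝ) < N := by exact_mod_cast h0
        have hle : (N : ℝ) ≤ ((m : ℝ)) ^ n := by exact_mod_cast hNle
        have := (Real.logb_le_logb one_lt_two hNpos (by positivity)).mpr hle
        rwa [Real.logb_pow] at this
    rw [div_le_iff₀ hn0]
    linarith
  refine Filter.le_liminf_of_le hcob ?_
  rw [eventually_atTop]
  refine ⟨2 * T + 2 * K + 1, fun n hn => ?_⟩
  have hnT : T ≤ n := by omega
  have hn1 : 1 ≤ n := by omega
  have hn0 : (0:ℝ) < n := by exact_mod_cast hn1
  -- counting chain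
  have hBz := count_ge hβ1 hβg hm2 hL ha1 hab hbb hcdef hδdef hK₁ hJ (n - T) z hzτ
  have hpath := B_path (β := β) (L := L) hgτ (n - T)
  rw [show T + (n - T) = n from by omega] at hpath
  have hNn := Nn_ge hβ1 hβlt2 hm2 hL hxIcc n
  set N := Nat.card {w : Fin n → Fin m // ∃ ε : ℕ → Fin m,
    (∀ k : Fin n, ε k = w k) ∧ x = ∑' k : ℕ, ((ε k : ℕ) : ℝ) / β ^ (k + 1)} with hNdef
  set e := (n - T) / K with hedef
  have hchain : 2 ^ e ≤ N := le_trans hBz (le_trans hpath hNn)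
  have h2e : ((2:ℝ)) ^ e ≤ (N : ℝ) := by exact_mod_cast hchain
  have h2epos : (0:ℝ) < 2 ^ e := by positivity
  have hlogb : (e : ℝ) ≤ Real.logb 2 N := by
    have := (Real.logb_le_logb one_lt_two h2epos (lt_of_lt_of_le h2epos h2e)).mpr h2e
    rw [Real.logb_pow, Real.logb_self_eq_one one_lt_two] at this
    linarith
  -- lower bound on e
  have hlt := Nat.lt_mul_div_succ (n - T) hK0
  have hltR : (n : ℝ) - T < K * e + K := by
    have h1 : ((n - T : ℕ) : ℝ) = (n : ℝ) - T := by
      rw [Nat.cast_sub hnT]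
    have h2 : ((K * (e + 1) : ℕ) : ℝ) = K * e + K := by push_cast; ring
    have := (Nat.cast_lt (α := ℝ)).mpr hlt
    rw [h1, h2] at this
    exact this
  have hnR : (2 * T + 2 * K + 1 : ℝ) ≤ n := by exact_mod_cast hn
  have hTK : (0:ℝ) ≤ T := by positivity
  have hfrac : 1 / (2 * (K:ℝ)) ≤ (e : ℝ) / n := by
    rw [div_le_div_iff₀ (by positivity) hn0]
    have heq : (e:ℝ) * (2 * K) = 2 * ((K:ℝ) * e) := by ring
    rw [one_mul, heq]
    linarith
  calc (1:ℝ) / (2 * K) ≤ (e : ℝ) / n := hfrac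
    _ ≤ Real.logb 2 N / n := by gcongr


/-- For β ∈ (1,(1+√5)/2) there is κ = κ(β) > 0 such that for every integer
m ≥ 2 and every x ∈ (0,(m-1)/(β-1)), `liminf (1/n) log₂ 𝒩_n(x;β) ≥ κ`. -/
theorem exponential_growth_small_beta (β : ℝ) (hβ1 : 1 < β)
    (hβ2 : β < (1 + Real.sqrt 5) / 2) :
    ∃ κ : ℝ, 0 < κ ∧ ∀ m : ℕ, 2 ≤ m → ∀ x : ℝ, x ∈ Ioo (0 : ℝ) ((m - 1) / (β - 1)) →
      κ ≤ atTop.liminf (fun n : ℕ => Real.logb 2 (Nn β m n x) / n) := by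
  obtain ⟨κ, hκ, hmain⟩ := exponential_growth_small_beta' β hβ1 hβ2
  exact ⟨κ, hκ, hmain⟩
end

section
/- Let β > 1 be a Pisot number and let m > β be a positive integer. There exists a constant C = C(β,m) > 0 such that for every n ≥ 1 and all words (ε₁,…,ε_n), (ε′₁,…,ε′_n) ∈ {0,1,…,m−1}^n with Σ_{j=1}^n ε_j β^{−j} ≠ Σ_{j=1}^n ε′_j β^{−j}, one has |Σ_{j=1}^n (ε_j − ε′_j) β^{−j}| ≥ C·β^{−n}. -/
open MeasureTheory Filter Set

set_option synthInstance.maxHeartbeats 1000000 in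
set_option maxHeartbeats 2000000 in
open IntermediateField Polynomial in
/-- Garsia separation: for a Pisot number β and integer m > β, there is
C > 0 such that any two distinct values of `Σ_{j=1}^n ε_j β^{-j}` with digits in
`{0,…,m-1}` differ by at least `C β^{-n}`. -/
theorem garsia_separation (β : ℝ) (m : ℕ) (hβ : IsPisot β) (hm : β < m) :
    ∃ C : ℝ, 0 < C ∧ ∀ n : ℕ, 1 ≤ n → ∀ ε ε' : Fin n → Fin m,
      (∑ j : Fin n, ((ε j : ℕ) : ℝ) / β ^ ((j : ℕ) + 1)) ≠
        (∑ j : Fin n, ((ε' j : ℕ) : ℝ) / β ^ ((j : ℕ) + 1)) →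
      C * β⁻¹ ^ n ≤
        |∑ j : Fin n, (((ε j : ℕ) : ℝ) - ((ε' j : ℕ) : ℝ)) / β ^ ((j : ℕ) + 1)| := by
  classical
  obtain ⟨hβ1, p, hpm, hpβ, hproots⟩ := hβ
  have hβ0 : (0:ℝ) < β := by linarith
  have hint : IsIntegral ℤ β := ⟨p, hpm, by rwa [← Polynomial.aeval_def]⟩
  have hintQ : IsIntegral ℚ β := hint.tower_top
  haveI : FiniteDimensional ℚ ℚ⟮β⟯ := IntermediateField.adjoin.finiteDimensional hintQ
  set g : ℚ⟮β⟯ := IntermediateField.AdjoinSimple.gen ℚ β with hgdef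
  have hg : algebraMap ℚ⟮β⟯ ℝ g = β := IntermediateField.AdjoinSimple.algebraMap_gen ℚ β
  set σ₀ : ℚ⟮β⟯ →ₐ[ℚ] ℂ :=
    (Complex.ofRealAm.restrictScalars ℚ).comp (IsScalarTower.toAlgHom ℚ ℚ⟮β⟯ ℝ) with hσ₀def
  have hσ₀ : ∀ y : ℚ⟮β⟯, σ₀ y = ((algebraMap ℚ⟮β⟯ ℝ y : ℝ) : ℂ) := fun y => rfl
  have hσ₀g : σ₀ g = (β : ℂ) := by rw [hσ₀, hg]
  have hqdvd : minpoly ℤ β ∣ p := minpoly.isIntegrallyClosed_dvd hint hpβ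
  have hQZ : minpoly ℚ β = (minpoly ℤ β).map (algebraMap ℤ ℚ) :=
    minpoly.isIntegrallyClosed_eq_field_fractions ℚ ℝ hint
  have hroot : ∀ σ : ℚ⟮β⟯ →ₐ[ℚ] ℂ, σ ≠ σ₀ → ‖σ g‖ < 1 := by
    intro σ hσ
    have h1 : Polynomial.aeval (σ g) (minpoly ℚ β) = 0 := by
      rw [← IntermediateField.minpoly_gen ℚ β, ← hgdef]
      have := Polynomial.aeval_algHom_apply σ g (minpoly ℚ g)
      rw [minpoly.aeval, map_zero] at this
      exact this
    have h2 : Polynomial.aeval (σ g) p = 0 := by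
      obtain ⟨r, hr⟩ := hqdvd
      have hz : Polynomial.aeval (σ g) (minpoly ℤ β) = 0 := by
        rw [hQZ, Polynomial.aeval_map_algebraMap] at h1; exact h1
      rw [hr, map_mul, hz, zero_mul]
    refine hproots _ h2 ?_
    intro hc
    apply hσ
    refine PowerBasis.algHom_ext (IntermediateField.adjoin.powerBasis hintQ) ?_
    rw [IntermediateField.adjoin.powerBasis_gen, ← hgdef]
    exact hc.trans hσ₀g.symm
  letI : DecidableEq (ℚ⟮β⟯ →ₐ[ℚ] ℂ) := Classical.decEq _
  set S := (Finset.univ.erase σ₀) with hSdef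
  have habs : ∀ σ ∈ S, ‖σ g‖ < 1 := fun σ hσ =>
    hroot σ (Finset.ne_of_mem_erase hσ)
  have hm1 : (1:ℝ) < (m:ℝ) := lt_trans hβ1 hm
  have hm0 : (0:ℝ) < (m:ℝ) - 1 := by linarith
  set C : ℝ := ∏ σ ∈ S, ((1 - ‖σ g‖) / ((m:ℝ) - 1)) with hCdef
  have hC0 : 0 < C :=
    Finset.prod_pos (fun σ hσ => div_pos (by linarith [habs σ hσ]) hm0)
  refine ⟨C, hC0, ?_⟩
  intro n hn ε ε' hne
  set a : Fin n → ℤ := fun j => (ε j : ℤ) - (ε' j : ℤ) with ha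
  set P : Polynomial ℤ :=
    ∑ j : Fin n, Polynomial.C (a j) * Polynomial.X ^ (n - 1 - (j:ℕ)) with hPdef
  have hPC : ∀ (z : ℂ), Polynomial.aeval z P
      = ∑ j : Fin n, ((a j : ℤ) : ℂ) * z ^ (n - 1 - (j:ℕ)) := by
    intro z
    rw [hPdef, map_sum]
    refine Finset.sum_congr rfl (fun j _ => ?_)
    simp [eq_intCast]
  have hPR : ∀ (y : ℝ), Polynomial.aeval y P
      = ∑ j : Fin n, ((a j : ℤ) : ℝ) * y ^ (n - 1 - (j:ℕ)) := by
    intro y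
    rw [hPdef, map_sum]
    refine Finset.sum_congr rfl (fun j _ => ?_)
    simp [eq_intCast]
  set x : ℚ⟮β⟯ := Polynomial.aeval g P with hxdef
  set SR : ℝ := ∑ j : Fin n, ((a j : ℤ) : ℝ) * β ^ (n - 1 - (j:ℕ)) with hSRdef
  have hxR : algebraMap ℚ⟮β⟯ ℝ x = SR := by
    have := Polynomial.aeval_algHom_apply (IsScalarTower.toAlgHom ℤ ℚ⟮β⟯ ℝ) g P
    simp only [IsScalarTower.coe_toAlgHom'] at this
    rw [hxdef, ← this, hg, hPR]
  -- key identity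
  have hpow : ∀ j : Fin n, β ^ (n - 1 - (j:ℕ)) * β⁻¹ ^ n = (β ^ ((j:ℕ) + 1))⁻¹ := by
    intro j
    have hb : β ^ (n - 1 - (j:ℕ)) * β ^ ((j:ℕ) + 1) = β ^ n := by
      rw [← pow_add]; congr 1; omega
    have h1 : (β:ℝ) ^ n ≠ 0 := pow_ne_zero _ (ne_of_gt hβ0)
    have h2 : (β:ℝ) ^ ((j:ℕ)+1) ≠ 0 := pow_ne_zero _ (ne_of_gt hβ0)
    rw [inv_pow]
    field_simp
    linarith [hb]
  have hD : (∑ j : Fin n, (((ε j : ℕ) : ℝ) - ((ε' j : ℕ) : ℝ)) / β ^ ((j : ℕ) + 1))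
      = SR * β⁻¹ ^ n := by
    rw [hSRdef, Finset.sum_mul]
    refine Finset.sum_congr rfl (fun j _ => ?_)
    rw [mul_assoc, hpow j, div_eq_mul_inv]
    congr 1
    rw [ha]; push_cast; ring
  have hDne : (∑ j : Fin n, (((ε j : ℕ) : ℝ) - ((ε' j : ℕ) : ℝ)) / β ^ ((j : ℕ) + 1)) ≠ 0 := by
    have : (∑ j : Fin n, (((ε j : ℕ) : ℝ) - ((ε' j : ℕ) : ℝ)) / β ^ ((j : ℕ) + 1))
        = (∑ j : Fin n, ((ε j : ℕ) : ℝ) / β ^ ((j : ℕ) + 1))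
          - (∑ j : Fin n, ((ε' j : ℕ) : ℝ) / β ^ ((j : ℕ) + 1)) := by
      rw [← Finset.sum_sub_distrib]
      exact Finset.sum_congr rfl (fun j _ => by rw [sub_div])
    rw [this]
    exact sub_ne_zero.mpr hne
  have hinvn : (0:ℝ) < β⁻¹ ^ n := pow_pos (inv_pos.mpr hβ0) n
  have hSRne : SR ≠ 0 := by
    intro h
    apply hDne
    rw [hD, h, zero_mul]
  have hxne : x ≠ 0 := by
    intro h
    apply hSRne
    rw [← hxR, h, map_zero]
  -- x is integral over ℤ
  have hgint : IsIntegral ℤ g := by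
    rw [← isIntegral_algebraMap_iff (algebraMap ℚ⟮β⟯ ℝ).injective, hg]; exact hint
  have hxint : IsIntegral ℤ x := by
    have hmem : x ∈ Algebra.adjoin ℤ ({g} : Set ℚ⟮β⟯) := by
      rw [hxdef]; exact Polynomial.aeval_mem_adjoin_singleton ℤ g
    have hle : Algebra.adjoin ℤ ({g} : Set ℚ⟮β⟯) ≤ integralClosure ℤ ℚ⟮β⟯ :=
      Algebra.adjoin_le (Set.singleton_subset_iff.mpr hgint)
    exact hle hmem
  have hNint : IsIntegral ℤ (Algebra.norm ℚ x) := Algebra.isIntegral_norm ℚ hxint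
  obtain ⟨z, hz⟩ := IsIntegrallyClosed.isIntegral_iff.mp hNint
  have hNne : Algebra.norm ℚ x ≠ 0 := Algebra.norm_ne_zero_iff.mpr hxne
  have hzne : z ≠ 0 := by rintro rfl; apply hNne; rw [← hz]; simp
  have h1z : (1:ℝ) ≤ ‖(algebraMap ℚ ℂ) (Algebra.norm ℚ x)‖ := by
    rw [← hz]
    have hc : (algebraMap ℚ ℂ) ((algebraMap ℤ ℚ) z) = (z : ℂ) := by
      rw [eq_intCast (algebraMap ℤ ℚ), map_intCast]
    rw [hc, Complex.norm_intCast]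
    exact_mod_cast Int.one_le_abs hzne
  have hprod : (algebraMap ℚ ℂ) (Algebra.norm ℚ x) = ∏ σ : ℚ⟮β⟯ →ₐ[ℚ] ℂ, σ x :=
    Algebra.norm_eq_prod_embeddings ℚ ℂ x
  have hσx : ∀ σ : ℚ⟮β⟯ →ₐ[ℚ] ℂ, σ x = Polynomial.aeval (σ g) P := by
    intro σ
    have := Polynomial.aeval_algHom_apply (σ.restrictScalars ℤ) g P
    simpa using this.symm
  have hσ₀x : ‖σ₀ x‖ = |SR| := by
    rw [hσ₀, hxR, Complex.norm_real, Real.norm_eq_abs]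
  -- bound for each non-real embedding
  have hbound : ∀ σ ∈ S, ‖σ x‖ ≤ ((m:ℝ) - 1) / (1 - ‖σ g‖) := by
    intro σ hσ
    set t := ‖σ g‖ with htdef
    have ht0 : 0 ≤ t := norm_nonneg _
    have ht1 : t < 1 := habs σ hσ
    have h1t : 0 < 1 - t := by linarith
    have haj : ∀ j : Fin n, |((a j : ℤ) : ℝ)| ≤ (m:ℝ) - 1 := by
      intro j
      rw [ha]
      have h1 : ((ε j : ℕ) : ℝ) ≤ (m:ℝ) - 1 := by
        have := (ε j).isLt
        have : ((ε j : ℕ) : ℝ) ≤ (m:ℝ) - 1 := by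
          have h2 : ((ε j : ℕ) : ℕ) + 1 ≤ m := (ε j).isLt
          push_cast
          have := (Nat.cast_le (α := ℝ)).mpr h2
          push_cast at this
          linarith
        exact this
      have h2 : ((ε' j : ℕ) : ℝ) ≤ (m:ℝ) - 1 := by
        have h2 : ((ε' j : ℕ) : ℕ) + 1 ≤ m := (ε' j).isLt
        push_cast
        have := (Nat.cast_le (α := ℝ)).mpr h2
        push_cast at this
        linarith
      have h3 : (0:ℝ) ≤ ((ε j : ℕ) : ℝ) := Nat.cast_nonneg _
      have h4 : (0:ℝ) ≤ ((ε' j : ℕ) : ℝ) := Nat.cast_nonneg _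
      rw [abs_le]
      constructor <;> push_cast <;> push_cast at h1 h2 <;> linarith
    have hgeom : ∑ k ∈ Finset.range n, t ^ k ≤ (1 - t)⁻¹ := by
      have hmul := geom_sum_mul t n
      have htn : 0 ≤ t ^ n := pow_nonneg ht0 n
      rw [inv_eq_one_div, le_div_iff₀ h1t]
      nlinarith [hmul]
    calc ‖σ x‖
        = ‖∑ j : Fin n, ((a j : ℤ) : ℂ) * (σ g) ^ (n - 1 - (j:ℕ))‖ := by
          rw [hσx σ, hPC]
      _ ≤ ∑ j : Fin n, ‖((a j : ℤ) : ℂ) * (σ g) ^ (n - 1 - (j:ℕ))‖ :=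
          norm_sum_le _ _
      _ = ∑ j : Fin n, |((a j : ℤ) : ℝ)| * t ^ (n - 1 - (j:ℕ)) := by
          refine Finset.sum_congr rfl (fun j _ => ?_)
          rw [norm_mul, norm_pow, Complex.norm_intCast]
      _ ≤ ∑ j : Fin n, ((m:ℝ) - 1) * t ^ (n - 1 - (j:ℕ)) := by
          refine Finset.sum_le_sum (fun j _ => ?_)
          exact mul_le_mul_of_nonneg_right (haj j) (pow_nonneg ht0 _)
      _ = ((m:ℝ) - 1) * ∑ j : Fin n, t ^ (n - 1 - (j:ℕ)) := by
          rw [Finset.mul_sum]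
      _ = ((m:ℝ) - 1) * ∑ k ∈ Finset.range n, t ^ k := by
          congr 1
          rw [Fin.sum_univ_eq_sum_range (fun j => t ^ (n - 1 - j)) n]
          exact Finset.sum_range_reflect (fun k => t ^ k) n
      _ ≤ ((m:ℝ) - 1) * (1 - t)⁻¹ := by
          exact mul_le_mul_of_nonneg_left hgeom (by linarith)
      _ = ((m:ℝ) - 1) / (1 - t) := by rw [div_eq_mul_inv]
  -- put everything together
  have hBpos : ∀ σ ∈ S, (0:ℝ) < ((m:ℝ) - 1) / (1 - ‖σ g‖) := by
    intro σ hσ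
    exact div_pos hm0 (by linarith [habs σ hσ])
  have hprodB : C * ∏ σ ∈ S, (((m:ℝ) - 1) / (1 - ‖σ g‖)) = 1 := by
    rw [hCdef, ← Finset.prod_mul_distrib]
    refine Finset.prod_eq_one (fun σ hσ => ?_)
    have h1 : (1:ℝ) - ‖σ g‖ ≠ 0 := by linarith [habs σ hσ]
    field_simp
  have hchain : (1:ℝ) ≤ |SR| * ∏ σ ∈ S, (((m:ℝ) - 1) / (1 - ‖σ g‖)) := by
    have h1 : (1:ℝ) ≤ ∏ σ : ℚ⟮β⟯ →ₐ[ℚ] ℂ, ‖σ x‖ := by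
      rw [← Complex.norm_prod, ← hprod]
      exact h1z
    have h2 : (∏ σ : ℚ⟮β⟯ →ₐ[ℚ] ℂ, ‖σ x‖)
        = ‖σ₀ x‖ * ∏ σ ∈ S, ‖σ x‖ := by
      rw [hSdef]
      exact (Finset.mul_prod_erase Finset.univ _ (Finset.mem_univ σ₀)).symm
    have h3 : (∏ σ ∈ S, ‖σ x‖)
        ≤ ∏ σ ∈ S, (((m:ℝ) - 1) / (1 - ‖σ g‖)) :=
      Finset.prod_le_prod (fun σ _ => norm_nonneg _) hbound
    calc (1:ℝ) ≤ ∏ σ : ℚ⟮β⟯ →ₐ[ℚ] ℂ, ‖σ x‖ := h1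
      _ = |SR| * ∏ σ ∈ S, ‖σ x‖ := by rw [h2, hσ₀x]
      _ ≤ |SR| * ∏ σ ∈ S, (((m:ℝ) - 1) / (1 - ‖σ g‖)) :=
          mul_le_mul_of_nonneg_left h3 (abs_nonneg _)
  have hCSR : C ≤ |SR| := by
    have hBprod : (0:ℝ) < ∏ σ ∈ S, (((m:ℝ) - 1) / (1 - ‖σ g‖)) :=
      Finset.prod_pos hBpos
    nlinarith [hchain, hprodB, hC0, abs_nonneg SR]
  rw [hD, abs_mul, abs_of_pos hinvn]
  exact mul_le_mul_of_nonneg_right hCSR (le_of_lt hinvn)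
end

section
/- Let β > 1 be a real number, m > β a positive integer with m ≥ 2, and set ρ = 1/β and S_i(t) = ρt + (i−1)(1−ρ)/(m−1) for i = 1,…,m. Then for every z ∈ [0,1] and every n ≥ 1, 𝒩_n((m−1)z/(β−1); β) equals the number of words (j₁,…,j_n) ∈ {1,…,m}^n such that z ∈ S_{j₁}∘S_{j₂}∘⋯∘S_{j_n}([0,1]). -/
open MeasureTheory Filter Set

/-- The map `S_i(t) = ρ t + (i-1)(1-ρ)/(m-1)` with `ρ = 1/β`, where `i : Fin m`
represents the index `i+1 ∈ {1,…,m}` (so the shift coefficient is `i`). -/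
noncomputable def Smap (β : ℝ) (m : ℕ) (i : Fin m) (t : ℝ) : ℝ :=
  β⁻¹ * t + ((i : ℕ) : ℝ) * (1 - β⁻¹) / ((m : ℝ) - 1)


noncomputable def dig (β : ℝ) (m : ℕ) (t : ℝ) : ℕ := min (m - 1) (⌊β * t⌋).toNat

noncomputable def gr (β : ℝ) (m : ℕ) (y : ℝ) : ℕ → ℝ
  | 0 => y
  | k + 1 => β * gr β m y k - dig β m (gr β m y k)

lemma dig_lt (β : ℝ) {m : ℕ} (hm : 1 ≤ m) (t : ℝ) : dig β m t < m :=
  lt_of_le_of_lt (min_le_left _ _) (Nat.sub_lt (by omega) one_pos)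

lemma step_mem {β : ℝ} {m : ℕ} (hβ : 1 < β) (hm : β < m) (hm2 : 2 ≤ m) {t : ℝ}
    (h0 : 0 ≤ t) (h1 : t ≤ ((m : ℝ) - 1) / (β - 1)) :
    0 ≤ β * t - dig β m t ∧ β * t - dig β m t ≤ ((m : ℝ) - 1) / (β - 1) := by
  have hβ1 : (0:ℝ) < β - 1 := by linarith
  have hm1 : (1:ℝ) ≤ (m:ℝ) - 1 := by
    have : (2:ℝ) ≤ m := by exact_mod_cast hm2
    linarith
  have hbt : 0 ≤ β * t := mul_nonneg (by linarith) h0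
  have hfl : (0:ℤ) ≤ ⌊β * t⌋ := Int.floor_nonneg.2 hbt
  have hM1 : (1:ℝ) < ((m : ℝ) - 1) / (β - 1) := by
    rw [lt_div_iff₀ hβ1]
    have : β < (m:ℝ) := hm
    linarith
  constructor
  · have h2' : ((⌊β * t⌋ : ℤ) : ℝ) ≤ β * t := Int.floor_le _
    have h2 : ((⌊β * t⌋.toNat : ℕ) : ℝ) ≤ β * t := by
      rwa [← Int.toNat_of_nonneg hfl, Int.cast_natCast] at h2'
    have h3 : (dig β m t : ℝ) ≤ ((⌊β * t⌋.toNat : ℕ) : ℝ) :=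
      Nat.cast_le.2 (min_le_right _ _)
    linarith
  · rcases le_or_gt (m - 1) (⌊β * t⌋).toNat with h | h
    · have hd : dig β m t = m - 1 := min_eq_left h
      have hdr : (dig β m t : ℝ) = (m : ℝ) - 1 := by
        rw [hd]; push_cast [Nat.cast_sub (by omega : 1 ≤ m)]; ring
      have hmul : β * t ≤ β * (((m : ℝ) - 1) / (β - 1)) :=
        mul_le_mul_of_nonneg_left h1 (by linarith)
      have hkey : β * (((m : ℝ) - 1) / (β - 1)) = ((m : ℝ) - 1) / (β - 1) + ((m:ℝ) - 1) := by
        field_simp; ring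
      rw [hdr]; linarith
    · have hd : dig β m t = (⌊β * t⌋).toNat := min_eq_right h.le
      have hdr : (dig β m t : ℝ) = ((⌊β * t⌋ : ℤ) : ℝ) := by
        rw [hd]; exact_mod_cast Int.toNat_of_nonneg hfl
      have hlt := Int.lt_floor_add_one (β * t)
      rw [hdr]; linarith
  
lemma gr_mem {β : ℝ} {m : ℕ} (hβ : 1 < β) (hm : β < m) (hm2 : 2 ≤ m) {y : ℝ}
    (h0 : 0 ≤ y) (h1 : y ≤ ((m : ℝ) - 1) / (β - 1)) :
    ∀ k, 0 ≤ gr β m y k ∧ gr β m y k ≤ ((m : ℝ) - 1) / (β - 1) := by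
  intro k
  induction k with
  | zero => exact ⟨h0, h1⟩
  | succ k ih => exact step_mem hβ hm hm2 ih.1 ih.2

lemma gr_partial {β : ℝ} (hβ : 1 < β) (m : ℕ) (y : ℝ) (n : ℕ) :
    y = (∑ k ∈ Finset.range n, (dig β m (gr β m y k) : ℝ) / β ^ (k + 1))
        + gr β m y n / β ^ n := by
  have hβ0 : (0:ℝ) < β := by linarith
  induction n with
  | zero => simp [gr]
  | succ n ih =>
    rw [Finset.sum_range_succ]
    have h : gr β m y (n + 1) / β ^ (n + 1)
        = gr β m y n / β ^ n - (dig β m (gr β m y n) : ℝ) / β ^ (n + 1) := by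
      show (β * gr β m y n - (dig β m (gr β m y n) : ℝ)) / β ^ (n + 1) = _
      rw [pow_succ]
      field_simp
    rw [h]; linarith [ih]

lemma summable_digits {β : ℝ} {m : ℕ} (hβ : 1 < β) (ε : ℕ → ℕ) (hε : ∀ k, ε k < m) :
    Summable (fun k : ℕ => (ε k : ℝ) / β ^ (k + 1)) := by
  have hβ0 : (0:ℝ) < β := by linarith
  have hg : Summable (fun k : ℕ => ((m:ℝ) * β⁻¹) * (β⁻¹) ^ k) :=
    (summable_geometric_of_lt_one (by positivity) (inv_lt_one_of_one_lt₀ hβ)).mul_left _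
  refine hg.of_nonneg_of_le (fun k => by positivity) (fun k => ?_)
  calc (ε k : ℝ) / β ^ (k + 1) ≤ (m : ℝ) / β ^ (k + 1) := by
        gcongr
        exact_mod_cast (hε k).le
    _ = (m:ℝ) * β⁻¹ * β⁻¹ ^ k := by
        rw [pow_succ', div_eq_mul_inv, mul_inv, ← inv_pow]; ring

lemma tsum_digits_le {β : ℝ} {m : ℕ} (hβ : 1 < β) (hm2 : 2 ≤ m)
    (ε : ℕ → ℕ) (hε : ∀ k, ε k < m) :
    ∑' k : ℕ, (ε k : ℝ) / β ^ (k + 1) ≤ ((m : ℝ) - 1) / (β - 1) := by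
  have hβ0 : (0:ℝ) < β := by linarith
  have hβ1 : (0:ℝ) < β - 1 := by linarith
  have hginv : |β⁻¹| < 1 := by
    rw [abs_of_pos (by positivity)]; exact inv_lt_one_of_one_lt₀ hβ
  have hgs : Summable (fun k : ℕ => (((m:ℝ) - 1) * β⁻¹) * (β⁻¹) ^ k) :=
    (summable_geometric_of_lt_one (by positivity) (inv_lt_one_of_one_lt₀ hβ)).mul_left _
  have hle : ∀ k : ℕ, (ε k : ℝ) / β ^ (k + 1) ≤ (((m:ℝ) - 1) * β⁻¹) * (β⁻¹) ^ k := by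
    intro k
    have h1 : (ε k : ℝ) ≤ (m : ℝ) - 1 := by
      have : (ε k : ℝ) + 1 ≤ m := by exact_mod_cast hε k
      linarith
    calc (ε k : ℝ) / β ^ (k + 1) ≤ ((m:ℝ) - 1) / β ^ (k + 1) := by gcongr
      _ = (((m:ℝ) - 1) * β⁻¹) * (β⁻¹) ^ k := by
          rw [pow_succ', div_eq_mul_inv, mul_inv, ← inv_pow]; ring
  have := Summable.tsum_le_tsum hle (summable_digits hβ ε hε) hgs
  refine this.trans ?_
  rw [tsum_mul_left, tsum_geometric_of_lt_one (by positivity) (inv_lt_one_of_one_lt₀ hβ)]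
  rw [le_div_iff₀ hβ1]
  have h1 : (1 - β⁻¹)⁻¹ = β / (β - 1) := by
    field_simp
  rw [h1]
  field_simp
  exact le_rfl

lemma tsum_digits_nonneg {β : ℝ} (hβ : 1 < β) (ε : ℕ → ℕ) :
    0 ≤ ∑' k : ℕ, (ε k : ℝ) / β ^ (k + 1) := by
  have hβ0 : (0:ℝ) < β := by linarith
  exact tsum_nonneg (fun k => by positivity)

lemma exists_expansion {β : ℝ} {m : ℕ} (hβ : 1 < β) (hm : β < m) (hm2 : 2 ≤ m) {y : ℝ}
    (h0 : 0 ≤ y) (h1 : y ≤ ((m : ℝ) - 1) / (β - 1)) :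
    ∃ δ : ℕ → Fin m, y = ∑' k : ℕ, ((δ k : ℕ) : ℝ) / β ^ (k + 1) := by
  have hβ0 : (0:ℝ) < β := by linarith
  refine ⟨fun k => ⟨dig β m (gr β m y k), dig_lt β (by omega) _⟩, ?_⟩
  set f : ℕ → ℝ := fun k => (dig β m (gr β m y k) : ℝ) / β ^ (k + 1) with hf
  have hsum : Summable f := summable_digits hβ _ (fun k => dig_lt β (by omega) _)
  have hten : Tendsto (fun n => ∑ k ∈ Finset.range n, f k) atTop (nhds y) := by
    have heq : ∀ n, ∑ k ∈ Finset.range n, f k = y - gr β m y n / β ^ n := by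
      intro n
      have := gr_partial (m := m) hβ y n
      linarith [this]
    rw [show (fun n => ∑ k ∈ Finset.range n, f k) = fun n => y - gr β m y n / β ^ n
          from funext heq]
    have hz : Tendsto (fun n : ℕ => gr β m y n / β ^ n) atTop (nhds 0) := by
      apply squeeze_zero (fun n => div_nonneg (gr_mem hβ hm hm2 h0 h1 n).1 (by positivity))
        (g := fun n => (((m:ℝ) - 1) / (β - 1)) * (β⁻¹) ^ n)
      · intro n
        rw [div_eq_mul_inv, ← inv_pow]
        exact mul_le_mul_of_nonneg_right (gr_mem hβ hm hm2 h0 h1 n).2 (by positivity)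
      · rw [show (0:ℝ) = (((m:ℝ) - 1) / (β - 1)) * 0 by ring]
        exact (tendsto_pow_atTop_nhds_zero_of_lt_one (by positivity)
          (inv_lt_one_of_one_lt₀ hβ)).const_mul _
    have := tendsto_const_nhds (x := y) (f := atTop (α := ℕ)) |>.sub hz
    simpa using this
  have := hsum.hasSum.tendsto_sum_nat
  exact tendsto_nhds_unique hten this

lemma foldr_Smap {β : ℝ} {m : ℕ} (hβ : 1 < β) (hm2 : 2 ≤ m) :
    ∀ (n : ℕ) (w : Fin n → Fin m) (t : ℝ),
      ((List.ofFn fun k : Fin n => Smap β m (w k)).foldr (· ∘ ·) id) t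
        = (β⁻¹) ^ n * t
          + ∑ k : Fin n, ((β - 1) / ((m:ℝ) - 1)) * ((w k : ℕ) : ℝ) / β ^ ((k : ℕ) + 1) := by
  have hβ0 : (0:ℝ) < β := by linarith
  have hm1 : ((m:ℝ) - 1) ≠ 0 := by
    have : (2:ℝ) ≤ m := by exact_mod_cast hm2
    linarith
  intro n
  induction n with
  | zero => intro w t; simp
  | succ n ih =>
    intro w t
    rw [List.ofFn_succ]
    simp only [List.foldr_cons, Function.comp_apply]
    rw [ih (fun i => w i.succ) t]
    rw [Fin.sum_univ_succ]
    simp only [Smap, Fin.val_succ, Fin.val_zero]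
    rw [mul_add, Finset.mul_sum]
    have hterm : ∀ k : Fin n,
        β⁻¹ * ((β - 1) / ((m:ℝ) - 1) * ((w k.succ : ℕ):ℝ) / β ^ ((k:ℕ) + 1))
          = (β - 1) / ((m:ℝ) - 1) * ((w k.succ : ℕ):ℝ) / β ^ ((k:ℕ) + 1 + 1) := by
      intro k
      rw [pow_succ β ((k:ℕ) + 1), inv_mul_eq_div, div_div]
    simp only [hterm]
    have h1 : β⁻¹ * ((β⁻¹) ^ n * t) = (β⁻¹) ^ (n + 1) * t := by rw [pow_succ]; ring
    have h2 : ((w 0 : ℕ):ℝ) * (1 - β⁻¹) / ((m:ℝ) - 1)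
        = (β - 1) / ((m:ℝ) - 1) * ((w 0 : ℕ):ℝ) / β ^ (0 + 1) := by
      rw [zero_add, pow_one]
      field_simp
    rw [h1, h2]
    ring

/-- `𝒩_n((m-1)z/(β-1); β)` equals the number of words J of length n
with `z ∈ S_J([0,1])`. -/
theorem Nn_eq_card_covering_words (β : ℝ) (hβ : 1 < β) (m : ℕ) (hm2 : 2 ≤ m)
    (hm : β < m) (z : ℝ) (hz : z ∈ Icc (0 : ℝ) 1) (n : ℕ) (hn : 1 ≤ n) :
    Nn β m n (((m : ℝ) - 1) * z / (β - 1)) =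
      Nat.card {J : Fin n → Fin m //
        z ∈ ((List.ofFn fun k : Fin n => Smap β m (J k)).foldr (· ∘ ·) id) ''
          (Icc (0 : ℝ) 1)} := by
  classical
  have hβ0 : (0:ℝ) < β := by linarith
  have hβ1 : (0:ℝ) < β - 1 := by linarith
  have hm1 : (0:ℝ) < (m:ℝ) - 1 := by
    have : (2:ℝ) ≤ m := by exact_mod_cast hm2
    linarith
  set c : ℝ := (β - 1) / ((m:ℝ) - 1) with hc
  set M : ℝ := ((m:ℝ) - 1) / (β - 1) with hM
  have hc0 : 0 < c := div_pos hβ1 hm1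
  set x : ℝ := ((m:ℝ) - 1) * z / (β - 1) with hx
  have hzx : c * x = z := by
    rw [hc, hx]
    field_simp
  have hxz : x = M * z := by rw [hx, hM]; ring
  have hMc : M * c = 1 := by rw [hM, hc]; field_simp
  unfold Nn
  apply Nat.card_congr
  apply Equiv.subtypeEquivRight
  intro w
  constructor
  · rintro ⟨ε, hpre, hxe⟩
    have hεlt : ∀ k : ℕ, ((ε k : ℕ)) < m := fun k => (ε k).isLt
    have hsum : Summable (fun k : ℕ => ((ε k : ℕ):ℝ) / β ^ (k + 1)) :=
      summable_digits hβ _ hεlt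
    set r : ℝ := ∑' j : ℕ, ((ε (j + n) : ℕ):ℝ) / β ^ (j + 1) with hr
    have h0r : 0 ≤ r := tsum_digits_nonneg hβ _
    have h1r : r ≤ M := tsum_digits_le hβ hm2 _ (fun j => (ε (j + n)).isLt)
    have hsplit : (∑ k ∈ Finset.range n, ((ε k : ℕ):ℝ) / β ^ (k + 1))
        + ∑' j : ℕ, ((ε (j + n) : ℕ):ℝ) / β ^ (j + n + 1)
        = ∑' k : ℕ, ((ε k : ℕ):ℝ) / β ^ (k + 1) := Summable.sum_add_tsum_nat_add n hsum
    have htail : ∑' j : ℕ, ((ε (j + n) : ℕ):ℝ) / β ^ (j + n + 1) = (β⁻¹) ^ n * r := by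
      rw [hr, ← tsum_mul_left]
      congr 1
      funext j
      rw [show j + n + 1 = n + (j + 1) by omega, pow_add, inv_pow]
      field_simp
    have hconv : ∑ k ∈ Finset.range n, ((ε k : ℕ):ℝ) / β ^ (k + 1)
        = ∑ k : Fin n, ((w k : ℕ):ℝ) / β ^ ((k:ℕ) + 1) := by
      rw [← Fin.sum_univ_eq_sum_range (fun k => ((ε k : ℕ):ℝ) / β ^ (k + 1)) n]
      exact Finset.sum_congr rfl (fun k _ => by rw [hpre k])
    refine ⟨c * r, ⟨mul_nonneg hc0.le h0r, ?_⟩, ?_⟩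
    · calc c * r ≤ c * M := by gcongr
        _ = 1 := by rw [mul_comm]; exact hMc
    · rw [foldr_Smap hβ hm2 n w (c * r)]
      have hz2 : z = c * ((∑ k : Fin n, ((w k : ℕ):ℝ) / β ^ ((k:ℕ) + 1)) + (β⁻¹) ^ n * r) := by
        rw [← hzx, hxe, ← hsplit, hconv, htail]
      rw [hz2, mul_add, Finset.mul_sum]
      rw [Finset.sum_congr rfl (fun (k : Fin n) _ =>
        (mul_div_assoc c ((w k : ℕ):ℝ) (β ^ ((k:ℕ) + 1))))]
      ring
  · rintro ⟨t, ⟨ht0, ht1⟩, hFt⟩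
    rw [foldr_Smap hβ hm2 n w t] at hFt
    set y : ℝ := M * t with hy
    have hy0 : 0 ≤ y := mul_nonneg (div_nonneg hm1.le hβ1.le) ht0
    have hy1 : y ≤ M := by
      rw [hy]
      exact mul_le_of_le_one_right (div_nonneg hm1.le hβ1.le) ht1
    obtain ⟨δ, hδ⟩ := exists_expansion hβ hm hm2 hy0 hy1
    set ε : ℕ → Fin m := fun k => if h : k < n then w ⟨k, h⟩ else δ (k - n) with hε
    have hpre : ∀ k : Fin n, ε (k : ℕ) = w k := by
      intro k
      rw [hε]
      simp [k.isLt]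
    refine ⟨ε, hpre, ?_⟩
    have hsum : Summable (fun k : ℕ => ((ε k : ℕ):ℝ) / β ^ (k + 1)) :=
      summable_digits hβ _ (fun k => (ε k).isLt)
    have hsplit : (∑ k ∈ Finset.range n, ((ε k : ℕ):ℝ) / β ^ (k + 1))
        + ∑' j : ℕ, ((ε (j + n) : ℕ):ℝ) / β ^ (j + n + 1)
        = ∑' k : ℕ, ((ε k : ℕ):ℝ) / β ^ (k + 1) := Summable.sum_add_tsum_nat_add n hsum
    have hεtail : ∀ j : ℕ, ε (j + n) = δ j := by
      intro j
      rw [hε]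
      have hh : ¬ (j + n < n) := by omega
      simp [hh]
    have htail : ∑' j : ℕ, ((ε (j + n) : ℕ):ℝ) / β ^ (j + n + 1) = (β⁻¹) ^ n * y := by
      rw [hδ, ← tsum_mul_left]
      congr 1
      funext j
      rw [hεtail j, show j + n + 1 = n + (j + 1) by omega, pow_add, inv_pow]
      field_simp
    have hconv : ∑ k ∈ Finset.range n, ((ε k : ℕ):ℝ) / β ^ (k + 1)
        = ∑ k : Fin n, ((w k : ℕ):ℝ) / β ^ ((k:ℕ) + 1) := by
      rw [← Fin.sum_univ_eq_sum_range (fun k => ((ε k : ℕ):ℝ) / β ^ (k + 1)) n]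
      exact Finset.sum_congr rfl (fun k _ => by rw [hpre k])
    have hfin : x = (β⁻¹) ^ n * y + ∑ k : Fin n, ((w k : ℕ):ℝ) / β ^ ((k:ℕ) + 1) := by
      rw [hxz, ← hFt, mul_add, Finset.mul_sum]
      congr 1
      · rw [hy]; ring
      · refine Finset.sum_congr rfl (fun k _ => ?_)
        rw [mul_div_assoc', ← mul_assoc, hMc, one_mul]
    rw [← hsplit, hconv, htail, hfin]
    ring
end

section
/- Let β ∈ (1, (1+√5)/2) and m = 2, and define κ = (1/2)·(⌊log_β((β²−1)/(1+β−β²))⌋ + 1)^{−1} if β > √2, and κ = (1/2)·(⌊log_β(1/(β−1))⌋ + 1)^{−1} if β ≤ √2. Then κ > 0, and for every x ∈ [1/β, 1/(β(β−1))] and every n ≥ 1 one has 𝒩_n(x;β) ≥ 2^{κn−1}. -/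
open MeasureTheory Filter Set

/-- The constant κ(β) of Theorem 5.2 / (5.1): κ = ½(⌊log_β((β²-1)/(1+β-β²))⌋+1)⁻¹ for
β > √2 and κ = ½(⌊log_β(1/(β-1))⌋+1)⁻¹ for β ≤ √2. -/
noncomputable def kappa (β : ℝ) : ℝ :=
  if Real.sqrt 2 < β then
    (1 / 2) * ((⌊Real.logb β ((β ^ 2 - 1) / (1 + β - β ^ 2))⌋ : ℝ) + 1)⁻¹
  else
    (1 / 2) * ((⌊Real.logb β (1 / (β - 1))⌋ : ℝ) + 1)⁻¹

namespace SwitchAux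


/-- `x` has digit word `f` (length `p`) as prefix data with remainder `y`. -/
def Pre (β : ℝ) (p : ℕ) (f : ℕ → Fin 2) (x y : ℝ) : Prop :=
  x = (∑ i ∈ Finset.range p, ((f i : ℕ) : ℝ) / β ^ (i + 1)) + y / β ^ p

def consF (d : Fin 2) (f : ℕ → Fin 2) : ℕ → Fin 2 :=
  fun i => if i = 0 then d else f (i - 1)

@[simp] lemma consF_zero (d : Fin 2) (f : ℕ → Fin 2) : consF d f 0 = d := rfl

@[simp] lemma consF_succ (d : Fin 2) (f : ℕ → Fin 2) (i : ℕ) : consF d f (i + 1) = f i := by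
  simp [consF]

lemma pre_zero (β x : ℝ) (f : ℕ → Fin 2) : Pre β 0 f x x := by
  simp [Pre]

lemma pre_cons {β : ℝ} (hβ : 0 < β) {p : ℕ} {f : ℕ → Fin 2} {x' y : ℝ} (h : Pre β p f x' y)
    (d : Fin 2) {x : ℝ} (hx : x = (((d : ℕ) : ℝ) + x') / β) :
    Pre β (p + 1) (consF d f) x y := by
  have hβ' : β ≠ 0 := ne_of_gt hβ
  unfold Pre at h ⊢
  rw [Finset.sum_range_succ']
  simp only [consF_succ, consF_zero]
  have hsum : ∀ i : ℕ, ((f i : ℕ) : ℝ) / β ^ (i + 1 + 1) = ((f i : ℕ) : ℝ) / β ^ (i + 1) / β := by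
    intro i
    rw [pow_succ, div_div]
  rw [Finset.sum_congr rfl fun i _ => hsum i, ← Finset.sum_div]
  rw [hx, h]
  field_simp
  ring

lemma pre_run0 {β : ℝ} (hβ : 0 < β) (a : ℕ) (x : ℝ) :
    Pre β a (fun _ => (0 : Fin 2)) x (β ^ a * x) := by
  have : β ^ a ≠ 0 := by positivity
  simp [Pre, mul_div_assoc, mul_comm (β ^ a) x, this]

lemma pre_run1 {β : ℝ} (hβ : 0 < β) (b : ℕ) (x' : ℝ) :
    Pre β b (fun _ => (1 : Fin 2)) x' ((fun y => β * y - 1)^[b] x') := by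
  induction b generalizing x' with
  | zero => simpa using pre_zero β x' _
  | succ b ih =>
    have h2 := pre_cons hβ (ih (β * x' - 1)) 1 (x := x') (by push_cast; field_simp; simp)
    have hfe : consF 1 (fun _ => (1 : Fin 2)) = fun _ => (1 : Fin 2) := by
      funext i; cases i <;> simp [consF]
    rw [hfe] at h2
    rw [Function.iterate_succ_apply]
    exact h2

lemma it_gap {β : ℝ} (hβ1 : 1 < β) (b : ℕ) (w : ℝ) :
    (β - 1)⁻¹ - (fun y => β * y - 1)^[b] w = β ^ b * ((β - 1)⁻¹ - w) := by
  induction b generalizing w with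
  | zero => simp
  | succ b ih =>
    rw [Function.iterate_succ_apply, ih (β * w - 1), pow_succ]
    have h1 : (β - 1) ≠ 0 := by intro h; nlinarith
    field_simp
    ring



lemma summable_dig {β : ℝ} (hβ1 : 1 < β) (ε : ℕ → Fin 2) :
    Summable (fun k => ((ε k : ℕ) : ℝ) / β ^ (k + 1)) := by
  have h0 : 0 < β := lt_trans one_pos hβ1
  have hg : Summable (fun k : ℕ => (β⁻¹) ^ (k + 1)) := by
    have := summable_geometric_of_lt_one (le_of_lt (inv_pos.2 h0))
      ((inv_lt_one₀ h0).2 hβ1)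
    exact (this.mul_left β⁻¹).congr (fun k => by rw [pow_succ']; )
  refine Summable.of_nonneg_of_le (fun k => by positivity) (fun k => ?_) hg
  have h1 : ((ε k : ℕ) : ℝ) ≤ 1 := by
    have := (ε k).is_le
    exact_mod_cast Nat.le_of_lt_succ (Nat.lt_succ_of_le this)
  have h2 : (0:ℝ) < β ^ (k+1) := by positivity
  rw [inv_pow, ← one_div]
  exact (div_le_div_iff_of_pos_right h2).2 h1




lemma tsum_split {β : ℝ} (hβ1 : 1 < β) (ε : ℕ → Fin 2) (p : ℕ) :
    ∑' k : ℕ, ((ε k : ℕ) : ℝ) / β ^ (k + 1)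
      = (∑ i ∈ Finset.range p, ((ε i : ℕ) : ℝ) / β ^ (i + 1))
        + (∑' k : ℕ, ((ε (k + p) : ℕ) : ℝ) / β ^ (k + 1)) / β ^ p := by
  have hβ0 : (0:ℝ) < β := lt_trans one_pos hβ1
  have hs := summable_dig hβ1 ε
  rw [← Summable.sum_add_tsum_nat_add p hs]
  congr 1
  have h1 : ∀ k : ℕ, ((ε (k + p) : ℕ) : ℝ) / β ^ (k + p + 1)
      = (((ε (k + p) : ℕ) : ℝ) / β ^ (k + 1)) * (β ^ p)⁻¹ := by
    intro k
    have hpow : β ^ (k + p + 1) = β ^ (k + 1) * β ^ p := by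
      rw [← pow_add]; ring_nf
    rw [hpow, ← div_div, div_eq_mul_inv]
  calc ∑' k : ℕ, ((ε (k + p) : ℕ) : ℝ) / β ^ (k + p + 1)
      = ∑' k : ℕ, (((ε (k + p) : ℕ) : ℝ) / β ^ (k + 1)) * (β ^ p)⁻¹ := by
        exact tsum_congr h1
    _ = (∑' k : ℕ, ((ε (k + p) : ℕ) : ℝ) / β ^ (k + 1)) * (β ^ p)⁻¹ := tsum_mul_right
    _ = (∑' k : ℕ, ((ε (k + p) : ℕ) : ℝ) / β ^ (k + 1)) / β ^ p := by
        rw [div_eq_mul_inv]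

def extendW (r n : ℕ) (g : ℕ → Fin 2) (w : Fin (n - r) → Fin 2) : Fin n → Fin 2 :=
  fun i => if h : (i : ℕ) < r then g i else w ⟨(i : ℕ) - r, by have := i.isLt; omega⟩

lemma extendW_lt {r n : ℕ} {g : ℕ → Fin 2} {w : Fin (n - r) → Fin 2} {i : Fin n}
    (h : (i : ℕ) < r) : extendW r n g w i = g i := dif_pos h

lemma extendW_ge {r n : ℕ} {g : ℕ → Fin 2} {w : Fin (n - r) → Fin 2} {i : Fin n}
    (h : ¬ (i : ℕ) < r) :
    extendW r n g w i = w ⟨(i : ℕ) - r, by have := i.isLt; omega⟩ := dif_neg h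

/-- Key counting recursion. -/
lemma rec_add {β : ℝ} (hβ1 : 1 < β) {n p q : ℕ} (hp : p ≤ n) (hq : q ≤ n)
    {u v : ℕ → Fin 2} {x yu yv : ℝ}
    (hu : Pre β p u x yu) (hv : Pre β q v x yv)
    {j : ℕ} (hjp : j < p) (hjq : j < q) (hne : u j ≠ v j) :
    Nn β 2 (n - p) yu + Nn β 2 (n - q) yv ≤ Nn β 2 n x := by
  classical
  -- generic extension construction
  have ext : ∀ (r : ℕ) (_ : r ≤ n) (g : ℕ → Fin 2) (y : ℝ), Pre β r g x y →
      ∀ w : {w : Fin (n - r) → Fin 2 // ∃ ε : ℕ → Fin 2,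
        (∀ k : Fin (n - r), ε k = w k) ∧ y = ∑' k : ℕ, ((ε k : ℕ) : ℝ) / β ^ (k + 1)},
      ∃ ε' : ℕ → Fin 2,
        (∀ k : Fin n, ε' k = extendW r n g w.1 k)
        ∧ x = ∑' k : ℕ, ((ε' k : ℕ) : ℝ) / β ^ (k + 1) := by
    intro r hr g y hgy w
    obtain ⟨ε, hε1, hε2⟩ := w.2
    set ε' : ℕ → Fin 2 := fun k => if h : k < r then g k else ε (k - r) with hε'
    have hv1 : ∀ i, i < r → ε' i = g i := fun i h => dif_pos h
    have hv2 : ∀ k, ε' (k + r) = ε k := by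
      intro k
      show (if h : k + r < r then g (k + r) else ε (k + r - r)) = ε k
      rw [dif_neg (by omega), Nat.add_sub_cancel]
    refine ⟨ε', fun k => ?_, ?_⟩
    · by_cases h : (k : ℕ) < r
      · rw [hv1 _ h, extendW_lt h]
      · rw [extendW_ge h]
        show (if h : (k:ℕ) < r then g k else ε ((k:ℕ) - r)) = _
        rw [dif_neg h]
        exact hε1 ⟨(k : ℕ) - r, by omega⟩
    · rw [tsum_split hβ1 ε' r]
      have e1 : (∑ i ∈ Finset.range r, ((ε' i : ℕ) : ℝ) / β ^ (i + 1))
          = ∑ i ∈ Finset.range r, ((g i : ℕ) : ℝ) / β ^ (i + 1) := by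
        refine Finset.sum_congr rfl fun i hi => by rw [hv1 i (Finset.mem_range.1 hi)]
      have e2 : (fun k : ℕ => ((ε' (k + r) : ℕ) : ℝ) / β ^ (k + 1))
          = fun k : ℕ => ((ε k : ℕ) : ℝ) / β ^ (k + 1) := by
        funext k; rw [hv2 k]
      rw [e1, e2, ← hε2]
      exact hgy
  have hC : ∀ (r : ℕ) (hr : r ≤ n) (g : ℕ → Fin 2) (y : ℝ) (hgy : Pre β r g x y)
      (w : {w : Fin (n - r) → Fin 2 // ∃ ε : ℕ → Fin 2,
        (∀ k : Fin (n - r), ε k = w k) ∧ y = ∑' k : ℕ, ((ε k : ℕ) : ℝ) / β ^ (k + 1)}),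
      ∃ ε : ℕ → Fin 2, (∀ k : Fin n, ε k = extendW r n g w.1 k)
        ∧ x = ∑' k : ℕ, ((ε k : ℕ) : ℝ) / β ^ (k + 1) := ext
  have hmain : Nat.card
      ({w : Fin (n - p) → Fin 2 // ∃ ε : ℕ → Fin 2,
        (∀ k : Fin (n - p), ε k = w k) ∧ yu = ∑' k : ℕ, ((ε k : ℕ) : ℝ) / β ^ (k + 1)} ⊕
       {w : Fin (n - q) → Fin 2 // ∃ ε : ℕ → Fin 2,
        (∀ k : Fin (n - q), ε k = w k) ∧ yv = ∑' k : ℕ, ((ε k : ℕ) : ℝ) / β ^ (k + 1)})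
      ≤ Nat.card {w : Fin n → Fin 2 // ∃ ε : ℕ → Fin 2,
        (∀ k : Fin n, ε k = w k) ∧ x = ∑' k : ℕ, ((ε k : ℕ) : ℝ) / β ^ (k + 1)} := by
    apply Nat.card_le_card_of_injective
      (Sum.elim
        (fun w => ⟨extendW p n u w.1, hC p hp u yu hu w⟩)
        (fun w => ⟨extendW q n v w.1, hC q hq v yv hv w⟩))
    have hjn : j < n := by omega
    rintro (w | w) (w' | w') h <;>
      simp only [Sum.elim_inl, Sum.elim_inr, Subtype.mk.injEq] at h
    · refine congrArg Sum.inl (Subtype.ext (funext fun i => ?_))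
      have hlt : p + (i : ℕ) < n := by have := i.isLt; omega
      have h2 := congrFun h ⟨p + (i : ℕ), hlt⟩
      have e1 : extendW p n u (↑w) ⟨p + (i : ℕ), hlt⟩ = (↑w : Fin (n-p) → Fin 2) i := by
        rw [extendW_ge (by simp only [Fin.val_mk]; omega)]
        congr 1
        apply Fin.ext
        simp
      have e2 : extendW p n u (↑w') ⟨p + (i : ℕ), hlt⟩ = (↑w' : Fin (n-p) → Fin 2) i := by
        rw [extendW_ge (by simp only [Fin.val_mk]; omega)]
        congr 1
        apply Fin.ext
        simp
      rw [e1, e2] at h2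
      exact h2
    · exfalso
      have h2 := congrFun h ⟨j, hjn⟩
      have e1 : extendW p n u (↑w) ⟨j, hjn⟩ = u j := extendW_lt (by simpa using hjp)
      have e2 : extendW q n v (↑w') ⟨j, hjn⟩ = v j := extendW_lt (by simpa using hjq)
      rw [e1, e2] at h2
      exact hne h2
    · exfalso
      have h2 := congrFun h ⟨j, hjn⟩
      have e1 : extendW q n v (↑w) ⟨j, hjn⟩ = v j := extendW_lt (by simpa using hjq)
      have e2 : extendW p n u (↑w') ⟨j, hjn⟩ = u j := extendW_lt (by simpa using hjp)
      rw [e1, e2] at h2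
      exact hne h2.symm
    · refine congrArg Sum.inr (Subtype.ext (funext fun i => ?_))
      have hlt : q + (i : ℕ) < n := by have := i.isLt; omega
      have h2 := congrFun h ⟨q + (i : ℕ), hlt⟩
      have e1 : extendW q n v (↑w) ⟨q + (i : ℕ), hlt⟩ = (↑w : Fin (n-q) → Fin 2) i := by
        rw [extendW_ge (by simp only [Fin.val_mk]; omega)]
        congr 1
        apply Fin.ext
        simp
      have e2 : extendW q n v (↑w') ⟨q + (i : ℕ), hlt⟩ = (↑w' : Fin (n-q) → Fin 2) i := by
        rw [extendW_ge (by simp only [Fin.val_mk]; omega)]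
        congr 1
        apply Fin.ext
        simp
      rw [e1, e2] at h2
      exact h2
  rw [Nat.card_sum] at hmain
  exact hmain




lemma exists_expansion {β : ℝ} (hβ1 : 1 < β) (hβ2 : β < 2) {x : ℝ}
    (hx0 : 0 ≤ x) (hx1 : x ≤ (β - 1)⁻¹) :
    ∃ ε : ℕ → Fin 2, x = ∑' k : ℕ, ((ε k : ℕ) : ℝ) / β ^ (k + 1) := by
  have hβ0 : (0:ℝ) < β := by linarith
  have hb1 : (0:ℝ) < β - 1 := by linarith
  set T : ℝ → ℝ := fun y => if 1 ≤ β * y then β * y - 1 else β * y with hT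
  set g : ℕ → ℝ := fun k => T^[k] x with hg
  set ε : ℕ → Fin 2 := fun k => if 1 ≤ β * g k then 1 else 0 with hε
  have hgsucc : ∀ k, g (k + 1) = T (g k) := by
    intro k
    simp only [hg, Function.iterate_succ_apply']
  have hstep : ∀ k, g (k + 1) = β * g k - ((ε k : ℕ) : ℝ) := by
    intro k
    rw [hgsucc k]
    by_cases h : 1 ≤ β * g k
    · simp [hT, hε, h]
    · simp [hT, hε, h]
  have hinv : ∀ k, 0 ≤ g k ∧ g k ≤ (β - 1)⁻¹ := by
    intro k
    induction k with
    | zero => exact ⟨hx0, hx1⟩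
    | succ k ih =>
      rw [hgsucc k]
      simp only [hT]
      by_cases h : 1 ≤ β * g k
      · rw [if_pos h]
        constructor
        · linarith
        · have : β * g k ≤ β * (β - 1)⁻¹ := by
            apply mul_le_mul_of_nonneg_left ih.2 (le_of_lt hβ0)
          have hβγ : β * (β - 1)⁻¹ = (β - 1)⁻¹ + 1 := by
            field_simp
            ring
          linarith
      · rw [if_neg h]
        push_neg at h
        constructor
        · exact mul_nonneg (le_of_lt hβ0) ih.1
        · have h1 : (1:ℝ) ≤ (β - 1)⁻¹ := by
            rw [le_inv_comm₀] <;> linarith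
          linarith
  -- partial sum identity
  have hid : ∀ n : ℕ, x = (∑ i ∈ Finset.range n, ((ε i : ℕ) : ℝ) / β ^ (i + 1)) + g n / β ^ n := by
    intro n
    induction n with
    | zero => simp [hg]
    | succ n ih =>
      rw [Finset.sum_range_succ]
      have h2 : g n / β ^ n = ((ε n : ℕ) : ℝ) / β ^ (n + 1) + g (n + 1) / β ^ (n + 1) := by
        rw [hstep n]
        have : (0:ℝ) < β ^ n := by positivity
        field_simp
        ring
      rw [ih, h2]
      ring
  -- convergence
  have hsum := summable_dig hβ1 ε
  refine ⟨ε, ?_⟩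
  have htend : Tendsto (fun n => ∑ i ∈ Finset.range n, ((ε i : ℕ) : ℝ) / β ^ (i + 1))
      atTop (nhds x) := by
    have h0 : Tendsto (fun n : ℕ => g n / β ^ n) atTop (nhds 0) := by
      apply squeeze_zero (fun n => div_nonneg (hinv n).1 (by positivity))
        (g := fun n : ℕ => (β - 1)⁻¹ * (β⁻¹) ^ n)
      · intro n
        have h1 : g n / β ^ n = g n * (β⁻¹) ^ n := by
          rw [inv_pow, div_eq_mul_inv]
        rw [h1]
        apply mul_le_mul_of_nonneg_right (hinv n).2
        positivity
      · have : Tendsto (fun n : ℕ => (β⁻¹) ^ n) atTop (nhds 0) := by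
          apply tendsto_pow_atTop_nhds_zero_of_lt_one (by positivity)
          rw [inv_lt_one_iff₀]; right; exact hβ1
        simpa using this.const_mul ((β - 1)⁻¹)
    have heq : (fun n => ∑ i ∈ Finset.range n, ((ε i : ℕ) : ℝ) / β ^ (i + 1))
        = fun n => x - g n / β ^ n := by
      funext n
      have := hid n
      linarith
    rw [heq]
    simpa using tendsto_const_nhds.sub h0
  have := (hasSum_iff_tendsto_nat_of_nonneg (fun i => by positivity) x).2 htend
  exact this.tsum_eq.symm

lemma one_le_Nn {β : ℝ} (hβ1 : 1 < β) (hβ2 : β < 2) {x : ℝ}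
    (hx0 : 0 ≤ x) (hx1 : x ≤ (β - 1)⁻¹) (n : ℕ) :
    1 ≤ Nn β 2 n x := by
  obtain ⟨ε, hε⟩ := exists_expansion hβ1 hβ2 hx0 hx1
  have : Nonempty {w : Fin n → Fin 2 // ∃ ε : ℕ → Fin 2,
      (∀ k : Fin n, ε k = w k) ∧ x = ∑' k : ℕ, ((ε k : ℕ) : ℝ) / β ^ (k + 1)} :=
    ⟨⟨fun i => ε i, ε, fun k => rfl, hε⟩⟩
  exact Nat.card_pos


/-- Branching step: from a point `z` reachable from `x` by a prefix of length `c`,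
both digit choices lead back into the switch region within the budget. -/
lemma branch {β : ℝ} (hβ1 : 1 < β) (L n c B : ℕ) (hBc : B + c + 1 = 2*L + 2)
    (hn : 2*L + 2 ≤ n)
    {x z : ℝ} (G : (ℕ → Fin 2) → (ℕ → Fin 2))
    (hcons : ∀ (p : ℕ) (f : ℕ → Fin 2) (y : ℝ), Pre β p f z y → Pre β (p + c) (G f) x y)
    (hGc : ∀ f : ℕ → Fin 2, G f c = f 0)
    (hγβ : β < (β - 1)⁻¹)
    (h1pos : 0 < β * z - 1)
    (h1cost : β⁻¹ ≤ β ^ B * (β * z - 1))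
    (h1up : β * z - 1 ≤ (β - 1)⁻¹ - 1/β)
    (h0low : 1/β ≤ β * z)
    (h0pos : 0 < (β - 1)⁻¹ - β * z)
    (h0cost : β⁻¹ ≤ β ^ B * ((β - 1)⁻¹ - β * z))
    (IH : ∀ m : ℕ, m < n → ∀ y ∈ Icc (1/β) ((β - 1)⁻¹ - 1/β),
      (2:ℝ) ^ ((1 / (2*((L:ℝ) + 1))) * (m:ℝ) - 1) ≤ (Nn β 2 m y : ℝ)) :
    (2:ℝ) ^ ((1 / (2*((L:ℝ) + 1))) * (n:ℝ) - 1) ≤ (Nn β 2 n x : ℝ) := by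
  have hβ0 : (0:ℝ) < β := lt_trans one_pos hβ1
  have hb1 : (0:ℝ) < β - 1 := by linarith
  have hβγ : β * (β - 1)⁻¹ = (β - 1)⁻¹ + 1 := by field_simp; ring
  have hγ1 : 1 + β⁻¹ ≤ (β - 1)⁻¹ := by
    have h := mul_lt_mul_of_pos_left hγβ hβ0
    rw [hβγ] at h
    have hββ : 1 ≤ β * β⁻¹ + (β - 1)⁻¹ - (β-1)⁻¹ := by
      rw [mul_inv_cancel₀ (ne_of_gt hβ0)]; ring_nf; exact le_refl 1
    nlinarith [mul_inv_cancel₀ (ne_of_gt hβ0)]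
  have hγ2 : 1/β ≤ (β - 1)⁻¹ - 1 := by
    rw [div_le_iff₀ hβ0]
    nlinarith [hβγ, hγβ]
  -- choice of a
  have hex1 : ∃ k : ℕ, β⁻¹ ≤ β ^ k * (β * z - 1) := by
    obtain ⟨k, hk⟩ := pow_unbounded_of_one_lt (β⁻¹ / (β * z - 1)) hβ1
    rw [div_lt_iff₀ h1pos] at hk
    exact ⟨k, by nlinarith⟩
  set a := Nat.find hex1 with ha_def
  have ha : β⁻¹ ≤ β ^ a * (β * z - 1) := Nat.find_spec hex1
  have haB : a ≤ B := Nat.find_min' hex1 h1cost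
  set yu := β ^ a * (β * z - 1) with hyu_def
  have hyu_mem : yu ∈ Icc (1/β) ((β - 1)⁻¹ - 1/β) := by
    constructor
    · rw [one_div]; exact ha
    · rcases Nat.eq_zero_or_pos a with h0 | hpos
      · rw [hyu_def, h0, pow_zero, one_mul]
        exact h1up
      · obtain ⟨a', ha'⟩ := Nat.exists_eq_succ_of_ne_zero (Nat.pos_iff_ne_zero.1 hpos)
        have hmin := Nat.find_min hex1 (show a' < a by omega)
        push_neg at hmin
        have : yu = β * (β ^ a' * (β * z - 1)) := by
          rw [hyu_def, ha', pow_succ]; ring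
        have hlt : yu < 1 := by
          rw [this]
          calc β * (β ^ a' * (β * z - 1)) < β * β⁻¹ := by
                apply mul_lt_mul_of_pos_left hmin hβ0
            _ = 1 := mul_inv_cancel₀ (ne_of_gt hβ0)
        have : (1:ℝ) ≤ (β - 1)⁻¹ - 1/β := by
          rw [one_div]; linarith
        linarith
  -- choice of b
  have hex0 : ∃ k : ℕ, β⁻¹ ≤ β ^ k * ((β - 1)⁻¹ - β * z) := by
    obtain ⟨k, hk⟩ := pow_unbounded_of_one_lt (β⁻¹ / ((β - 1)⁻¹ - β * z)) hβ1
    rw [div_lt_iff₀ h0pos] at hk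
    exact ⟨k, by nlinarith⟩
  set b := Nat.find hex0 with hb_def
  have hb : β⁻¹ ≤ β ^ b * ((β - 1)⁻¹ - β * z) := Nat.find_spec hex0
  have hbB : b ≤ B := Nat.find_min' hex0 h0cost
  set yv := (fun y => β * y - 1)^[b] (β * z) with hyv_def
  have hgap : (β - 1)⁻¹ - yv = β ^ b * ((β - 1)⁻¹ - β * z) := it_gap hβ1 b (β * z)
  have hyv_mem : yv ∈ Icc (1/β) ((β - 1)⁻¹ - 1/β) := by
    constructor
    · rcases Nat.eq_zero_or_pos b with h0 | hpos
      · rw [hyv_def, h0, Function.iterate_zero_apply]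
        exact h0low
      · obtain ⟨b', hb'⟩ := Nat.exists_eq_succ_of_ne_zero (Nat.pos_iff_ne_zero.1 hpos)
        have hmin := Nat.find_min hex0 (show b' < b by omega)
        push_neg at hmin
        have he : β ^ b * ((β - 1)⁻¹ - β * z) = β * (β ^ b' * ((β - 1)⁻¹ - β * z)) := by
          rw [hb', pow_succ]; ring
        have hlt : β ^ b * ((β - 1)⁻¹ - β * z) < 1 := by
          rw [he]
          calc β * (β ^ b' * ((β - 1)⁻¹ - β * z)) < β * β⁻¹ := by
                apply mul_lt_mul_of_pos_left hmin hβ0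
            _ = 1 := mul_inv_cancel₀ (ne_of_gt hβ0)
        have : (β - 1)⁻¹ - 1 < yv := by linarith [hgap]
        linarith [hγ2]
    · rw [one_div]; linarith [hgap, hb]
  -- the two words
  have hPreu : Pre β ((a + 1) + c) (G (consF 1 (fun _ => 0))) x yu := by
    apply hcons
    apply pre_cons hβ0 (pre_run0 hβ0 a (β * z - 1)) 1
    push_cast
    field_simp
    simp
  have hPrev : Pre β ((b + 1) + c) (G (consF 0 (fun _ => 1))) x yv := by
    apply hcons
    apply pre_cons hβ0 (pre_run1 hβ0 b (β * z)) 0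
    push_cast
    field_simp
    simp
  have hdiff : (G (consF 1 (fun _ => 0))) c ≠ (G (consF 0 (fun _ => 1))) c := by
    rw [hGc, hGc, consF_zero, consF_zero]
    decide
  have hpn : (a + 1) + c ≤ n := by omega
  have hqn : (b + 1) + c ≤ n := by omega
  have hrec := rec_add hβ1 hpn hqn hPreu hPrev
    (j := c) (by omega) (by omega) hdiff
  have hu2 := IH (n - ((a + 1) + c)) (by omega) yu hyu_mem
  have hv2 := IH (n - ((b + 1) + c)) (by omega) yv hyv_mem
  set κ := 1 / (2*((L:ℝ) + 1)) with hκ_def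
  have hκpos : 0 < κ := by rw [hκ_def]; positivity
  have hκ1 : κ * (2*(L:ℝ) + 2) = 1 := by
    rw [hκ_def]; field_simp
  have hmono : ∀ r : ℕ, r ≤ 2*L + 2 → r ≤ n →
      (2:ℝ) ^ (κ * ((n:ℝ) - (2*(L:ℝ) + 2)) - 1) ≤ (2:ℝ) ^ (κ * (((n - r : ℕ):ℝ)) - 1) := by
    intro r h1 h2
    apply Real.rpow_le_rpow_of_exponent_le one_le_two
    rw [Nat.cast_sub h2]
    have hr : (r:ℝ) ≤ 2*(L:ℝ) + 2 := by exact_mod_cast h1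
    nlinarith
  have hsplit : (2:ℝ) ^ (κ * (n:ℝ) - 1)
      = (2:ℝ) ^ (κ * ((n:ℝ) - (2*(L:ℝ) + 2)) - 1) + (2:ℝ) ^ (κ * ((n:ℝ) - (2*(L:ℝ) + 2)) - 1) := by
    have he : κ * (n:ℝ) - 1 = (κ * ((n:ℝ) - (2*(L:ℝ) + 2)) - 1) + 1 := by
      linear_combination hκ1
    rw [he, Real.rpow_add_one two_ne_zero]
    ring
  calc (2:ℝ) ^ (κ * (n:ℝ) - 1)
      = (2:ℝ) ^ (κ * ((n:ℝ) - (2*(L:ℝ) + 2)) - 1)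
        + (2:ℝ) ^ (κ * ((n:ℝ) - (2*(L:ℝ) + 2)) - 1) := hsplit
    _ ≤ (2:ℝ) ^ (κ * (((n - ((a+1)+c) : ℕ):ℝ)) - 1)
        + (2:ℝ) ^ (κ * (((n - ((b+1)+c) : ℕ):ℝ)) - 1) := by
        apply add_le_add (hmono _ (by omega) hpn) (hmono _ (by omega) hqn)
    _ ≤ (Nn β 2 (n - ((a+1)+c)) yu : ℝ) + (Nn β 2 (n - ((b+1)+c)) yv : ℝ) := by
        apply add_le_add hu2 hv2
    _ ≤ (Nn β 2 n x : ℝ) := by exact_mod_cast hrec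

lemma main {β : ℝ} (hβ1 : 1 < β) (hgold : β^2 < β + 1) (L : ℕ)
    (P1 : 1 ≤ β^(2*L+1) * (β-1))
    (P2 : 2 * (β^(2*L+1))⁻¹ ≤ (β-1)⁻¹ - β) :
    ∀ n : ℕ, ∀ x ∈ Icc (1/β) ((β-1)⁻¹ - 1/β),
      (2:ℝ)^((1/(2*((L:ℝ)+1))) * (n:ℝ) - 1) ≤ (Nn β 2 n x : ℝ) := by
  intro n
  induction n using Nat.strong_induction_on with
  | _ n IH =>
    intro x hx
    obtain ⟨hxl, hxr⟩ := hx
    have hβ0 : (0:ℝ) < β := lt_trans one_pos hβ1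
    have hb1 : (0:ℝ) < β - 1 := by linarith
    have hβ2 : β < 2 := by nlinarith
    have hβγ : β * (β-1)⁻¹ = (β-1)⁻¹ + 1 := by field_simp; ring
    have hγβ : β < (β-1)⁻¹ := by
      rw [show (β-1)⁻¹ = 1/(β-1) by rw [one_div], lt_div_iff₀ hb1]
      nlinarith
    have hinv1 : β⁻¹ ≤ 1 := by
      rw [inv_le_one₀ hβ0]; linarith
    have h1β : 1/β ≤ 1 := by rw [one_div]; exact hinv1
    have hββinv : β * (1/β) = 1 := by field_simp
    by_cases hn : n < 2*L+2
    · -- base case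
      have hκn : (1/(2*((L:ℝ)+1))) * (n:ℝ) - 1 ≤ 0 := by
        have hn' : (n:ℝ) ≤ 2*(L:ℝ) + 2 := by
          have : (n:ℝ) ≤ ((2*L+2 : ℕ):ℝ) := by exact_mod_cast le_of_lt hn
          push_cast at this; linarith
        have hval : (1/(2*((L:ℝ)+1))) * (2*(L:ℝ)+2) = 1 := by
          field_simp
        have hκpos : (0:ℝ) < 1/(2*((L:ℝ)+1)) := by positivity
        nlinarith
      have hB1 : (2:ℝ)^((1/(2*((L:ℝ)+1))) * (n:ℝ) - 1) ≤ 1 :=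
        Real.rpow_le_one_of_one_le_of_nonpos one_le_two hκn
      have hB2 : (1:ℝ) ≤ (Nn β 2 n x : ℝ) := by
        have h0x : (0:ℝ) ≤ x := le_trans (by positivity) hxl
        have hxγ : x ≤ (β-1)⁻¹ := le_trans hxr (sub_le_self _ (by positivity))
        exact_mod_cast one_le_Nn hβ1 hβ2 h0x hxγ n
      linarith
    · push_neg at hn
      set t := (β^(2*L+2))⁻¹ with ht_def
      have htpos : (0:ℝ) < t := by positivity
      have hppos : ∀ k : ℕ, (0:ℝ) < β ^ k := fun k => pow_pos hβ0 k
      have hpow : β^(2*L+2) = β^(2*L+1) * β := by ring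
      have hpow2 : β^(2*L+1) = β^(2*L) * β := by ring
      have hcostA : β^(2*L+1) * t = β⁻¹ := by
        rw [ht_def, hpow, mul_inv, ← mul_assoc, mul_inv_cancel₀ (ne_of_gt (hppos _)), one_mul]
      have hβt : β * t = (β^(2*L+1))⁻¹ := by
        rw [ht_def, hpow, mul_inv]
        field_simp
        try ring
      have hP1' : β⁻¹ ≤ β^(2*L) * (β-1) := by
        have h := P1
        rw [pow_succ] at h
        have hp0 := hppos (2*L)
        nlinarith [mul_inv_cancel₀ (ne_of_gt hβ0)]
      have hcostB : β^(2*L) * (β*t) = β⁻¹ := by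
        rw [← hcostA, hpow2]; ring
      have hP2' : 2*(β*t) ≤ (β-1)⁻¹ - β := by rw [hβt]; exact P2
      have hz1 : 1 ≤ β*x := by
        have h := mul_le_mul_of_nonneg_left hxl hβ0.le
        rwa [hββinv] at h
      have hβx : β*x ≤ (β-1)⁻¹ := by
        have h := mul_le_mul_of_nonneg_left hxr hβ0.le
        have he : β*((β-1)⁻¹ - 1/β) = (β-1)⁻¹ := by
          rw [mul_sub, hβγ, hββinv]; ring
        rwa [he] at h
      by_cases h1 : t ≤ β*x - 1
      · by_cases h0 : t ≤ (β-1)⁻¹ - β*x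
        · -- middle case: branch immediately
          apply branch hβ1 L n 0 (2*L+1) (by omega) hn (z := x) id
            (fun p f y h => by simpa using h) (fun f => rfl) hγβ
          · linarith
          · rw [← hcostA]
            exact mul_le_mul_of_nonneg_left h1 (hppos _).le
          · linarith
          · linarith
          · linarith
          · rw [← hcostA]
            exact mul_le_mul_of_nonneg_left h0 (hppos _).le
          · exact fun m hm y hy => IH m hm y hy
        · -- near-right case
          push_neg at h0
          have hz : β*x - 1 ≤ (β-1)⁻¹ - 1 := by linarith
          have hzlow : (β-1)⁻¹ - 1 - t < β*x - 1 := by linarith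
          have he2 : β*((β-1)⁻¹ - 1 - t) = (β-1)⁻¹ + 1 - β - β*t := by
            linear_combination hβγ
          have he3 : β*((β-1)⁻¹ - 1) = (β-1)⁻¹ + 1 - β := by
            linear_combination hβγ
          have hm1 := mul_lt_mul_of_pos_left hzlow hβ0
          have hm2 := mul_le_mul_of_nonneg_left hz hβ0.le
          rw [he2] at hm1
          rw [he3] at hm2
          apply branch hβ1 L n 1 (2*L) (by omega) hn (z := β*x - 1) (consF 1)
            (fun p f y h => pre_cons hβ0 h 1 (by push_cast; field_simp; simp))
            (fun f => consF_succ 1 f 0) hγβ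
          · linarith
          · have hl : β*t ≤ β*(β*x-1) - 1 := by linarith
            calc β⁻¹ = β^(2*L) * (β*t) := hcostB.symm
              _ ≤ β^(2*L) * (β*(β*x-1) - 1) :=
                  mul_le_mul_of_nonneg_left hl (hppos _).le
          · rw [one_div]; linarith
          · rw [one_div]; linarith
          · linarith
          · have hl : β - 1 ≤ (β-1)⁻¹ - β*(β*x-1) := by linarith
            calc β⁻¹ ≤ β^(2*L) * (β-1) := hP1'
              _ ≤ β^(2*L) * ((β-1)⁻¹ - β*(β*x-1)) :=
                  mul_le_mul_of_nonneg_left hl (hppos _).le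
          · exact fun m hm y hy => IH m hm y hy
      · -- near-left case
        push_neg at h1
        have hz2 : β*x < 1 + t := by linarith
        have hm1 := mul_le_mul_of_nonneg_left hz1 hβ0.le
        rw [mul_one] at hm1
        have hm2 := mul_lt_mul_of_pos_left hz2 hβ0
        have he4 : β*(1+t) = β + β*t := by ring
        rw [he4] at hm2
        apply branch hβ1 L n 1 (2*L) (by omega) hn (z := β*x) (consF 0)
          (fun p f y h => pre_cons hβ0 h 0 (by push_cast; field_simp; simp))
          (fun f => consF_succ 0 f 0) hγβ
        · linarith
        · have hl : β - 1 ≤ β*(β*x) - 1 := by linarith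
          calc β⁻¹ ≤ β^(2*L) * (β-1) := hP1'
            _ ≤ β^(2*L) * (β*(β*x) - 1) :=
                mul_le_mul_of_nonneg_left hl (hppos _).le
        · rw [one_div]; linarith
        · rw [one_div]; linarith
        · linarith
        · have hl : β*t ≤ (β-1)⁻¹ - β*(β*x) := by linarith
          calc β⁻¹ = β^(2*L) * (β*t) := hcostB.symm
            _ ≤ β^(2*L) * ((β-1)⁻¹ - β*(β*x)) :=
                mul_le_mul_of_nonneg_left hl (hppos _).le
        · exact fun m hm y hy => IH m hm y hy


lemma P12_case1 {β E X : ℝ} (hβ1 : 1 < β) (hβsq : 2 < β^2) (hgold : β^2 < β+1)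
    (hEβ : β ≤ E) (hE0 : 0 < E) (hEs : β^2 - 1 < E*(1+β-β^2))
    (hX : X*β = E^2) (hXpos : 0 < X) :
    1 ≤ X*(β-1) ∧ 2*X⁻¹ ≤ (β-1)⁻¹-β := by
  have hβ0 : (0:ℝ) < β := by linarith
  have hb1 : (0:ℝ) < β-1 := by linarith
  constructor
  · nlinarith [hEs, hEβ, hβsq, hE0, hX, hXpos, hb1, mul_pos hE0 hb1]
  · have hγs : ((β-1)⁻¹ - β)*(β-1) = 1 + β - β^2 := by field_simp; ring
    have k2 : (1+β-β^2)*E^2 > (β^2-1)*E := by nlinarith [hEs, hE0]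
    have k3 : (β^2-1)*E ≥ (β^2-1)*β := by nlinarith [hEβ, hβsq]
    have k4 : (β^2-1)*β ≥ 2*β*(β-1) := by nlinarith [sq_nonneg (β-1), hβ0]
    have k5 : (1+β-β^2)*E^2 ≥ 2*β*(β-1) := by linarith
    have k6 : ((β-1)⁻¹-β)*X*(β*(β-1)) = ((β-1)⁻¹-β)*(β-1)*(X*β) := by ring
    have k7 : (0:ℝ) < β*(β-1) := mul_pos hβ0 hb1
    have k8 : ((β-1)⁻¹-β)*X*(β*(β-1)) = (1+β-β^2)*E^2 := by
      rw [k6, hγs, hX]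
    have h3 : 2*(β*(β-1)) ≤ (((β-1)⁻¹-β)*X)*(β*(β-1)) := by
      calc 2*(β*(β-1)) = 2*β*(β-1) := by ring
        _ ≤ (1+β-β^2)*E^2 := k5
        _ = ((β-1)⁻¹-β)*X*(β*(β-1)) := k8.symm
    have key : 2 ≤ ((β-1)⁻¹ - β) * X := le_of_mul_le_mul_right h3 k7
    rw [show 2*X⁻¹ = 2/X by rw [div_eq_mul_inv], div_le_iff₀ hXpos]
    linarith

lemma P12_case2 {β E X : ℝ} (hβ1 : 1 < β) (hβsq : β^2 ≤ 2) (hgold : β^2 < β+1)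
    (hEβ : β ≤ E) (hE0 : 0 < E) (hEb : 1 < E*(β-1))
    (hX : X*β = E^2) (hXpos : 0 < X) :
    1 ≤ X*(β-1) ∧ 2*X⁻¹ ≤ (β-1)⁻¹-β := by
  have hβ0 : (0:ℝ) < β := by linarith
  have hb1 : (0:ℝ) < β-1 := by linarith
  have hβ32 : β ≤ 3/2 := by nlinarith
  constructor
  · nlinarith [hEb, hEβ, hX, hE0, hXpos, hb1]
  · have hγs : ((β-1)⁻¹ - β)*(β-1) = 1 + β - β^2 := by field_simp; ring
    have hs : (0:ℝ) < 1 + β - β^2 := by nlinarith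
    have k1 : 1 < (E*(β-1))^2 := by nlinarith [hEb]
    have h1 : (β-1)^2 ≤ 1/4 := by nlinarith
    have h2 : 2*β*(β-1)^2 ≤ 3/4 := by nlinarith [h1, hβ32, hβ0]
    have k2 : 2*β*(β-1)^3 ≤ (3/4)*(β-1) := by nlinarith [h2, hb1]
    have k3 : (3/4)*(β-1) ≤ 1 + β - β^2 := by nlinarith
    have k4 : (1+β-β^2) * (E*(β-1))^2 > 2*β*(β-1)^3 := by nlinarith [hs, k1, k2, k3]
    have k4' : (1+β-β^2)*E^2*(β-1)^2 > 2*β*(β-1)^3 := by linear_combination k4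
    have k5 : (1+β-β^2)*E^2 ≥ 2*β*(β-1) := by
      have h2 : (2*β*(β-1))*(β-1)^2 < ((1+β-β^2)*E^2)*(β-1)^2 := by linear_combination k4'
      exact (lt_of_mul_lt_mul_right h2 (by positivity)).le
    have k8 : ((β-1)⁻¹-β)*X*(β*(β-1)) = (1+β-β^2)*E^2 := by
      calc ((β-1)⁻¹-β)*X*(β*(β-1)) = ((β-1)⁻¹-β)*(β-1)*(X*β) := by ring
        _ = (1+β-β^2)*E^2 := by rw [hγs, hX]
    have k7 : (0:ℝ) < β*(β-1) := mul_pos hβ0 hb1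
    have h3 : 2*(β*(β-1)) ≤ (((β-1)⁻¹-β)*X)*(β*(β-1)) := by
      calc 2*(β*(β-1)) = 2*β*(β-1) := by ring
        _ ≤ (1+β-β^2)*E^2 := k5
        _ = ((β-1)⁻¹-β)*X*(β*(β-1)) := k8.symm
    have key : 2 ≤ ((β-1)⁻¹ - β) * X := le_of_mul_le_mul_right h3 k7
    rw [show 2*X⁻¹ = 2/X by rw [div_eq_mul_inv], div_le_iff₀ hXpos]
    linarith

end SwitchAux

/-- for β ∈ (1,(1+√5)/2), κ = κ(β) > 0 and for every x in the switch
region [1/β, 1/(β(β-1))] and every n ≥ 1 one has 𝒩_n(x;β) ≥ 2^{κn−1}. -/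
theorem switch_region_growth (β : ℝ) (hβ1 : 1 < β) (hβ2 : β < (1 + Real.sqrt 5) / 2) :
    0 < kappa β ∧
      ∀ x ∈ Icc (1 / β) (1 / (β * (β - 1))), ∀ n : ℕ, 1 ≤ n →
        (2 : ℝ) ^ (kappa β * (n : ℝ) - 1) ≤ (Nn β 2 n x : ℝ) := by
  have hβ0 : (0:ℝ) < β := lt_trans one_pos hβ1
  have hb1 : (0:ℝ) < β - 1 := by linarith
  have h5 : Real.sqrt 5 ^ 2 = 5 := Real.sq_sqrt (by norm_num)
  have hgold : β^2 < β + 1 := by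
    have h2 : 2*β - 1 < Real.sqrt 5 := by linarith
    have h3 : (0:ℝ) < 2*β - 1 := by linarith
    nlinarith [h2, h3, h5, Real.sqrt_nonneg 5]
  have hiv : 1/(β*(β-1)) = (β-1)⁻¹ - 1/β := by
    field_simp
    ring
  have hbridge : ∃ L : ℕ, kappa β = 1/(2*((L:ℝ)+1))
      ∧ 1 ≤ β^(2*L+1) * (β-1) ∧ 2 * (β^(2*L+1))⁻¹ ≤ (β-1)⁻¹ - β := by
    by_cases hsq : Real.sqrt 2 < β
    · -- β > √2
      set A := (β^2 - 1)/(1 + β - β^2) with hA_def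
      have hs : (0:ℝ) < 1 + β - β^2 := by nlinarith
      have hsq2 : Real.sqrt 2 ^ 2 = 2 := Real.sq_sqrt (by norm_num)
      have hβsq : 2 < β^2 := by nlinarith [Real.sqrt_nonneg 2]
      have hA1 : 1 ≤ A := by
        rw [hA_def, le_div_iff₀ hs]; nlinarith
      have hA0 : (0:ℝ) < A := lt_of_lt_of_le one_pos hA1
      have hfl0 : 0 ≤ ⌊Real.logb β A⌋ := Int.floor_nonneg.2 (Real.logb_nonneg hβ1 hA1)
      set L : ℕ := (⌊Real.logb β A⌋).toNat with hL_def
      have hLR : ((⌊Real.logb β A⌋ : ℤ):ℝ) = ((L:ℕ):ℝ) := by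
        exact_mod_cast (Int.toNat_of_nonneg hfl0).symm
      have hE : A < β^(L+1) := by
        have h1 : Real.logb β A < ((L:ℝ) + 1) := by
          have h2 := Int.lt_floor_add_one (Real.logb β A)
          rw [hLR] at h2
          exact h2
        have h2 := (Real.logb_lt_iff_lt_rpow hβ1 hA0).1 h1
        rwa [show ((L:ℝ)+1) = ((L+1 : ℕ):ℝ) by push_cast; ring, Real.rpow_natCast] at h2
      have hEβ : β ≤ β^(L+1) := by
        calc β = β^1 := (pow_one β).symm
          _ ≤ β^(L+1) := pow_le_pow_right₀ hβ1.le (by omega)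
      have hEs : β^2 - 1 < β^(L+1) * (1 + β - β^2) := by
        rw [hA_def, div_lt_iff₀ hs] at hE; linarith
      have hX : β^(2*L+1) * β = (β^(L+1))^2 := by
        rw [← pow_succ, ← pow_mul]
        congr 1
        omega
      obtain ⟨hP1, hP2⟩ := SwitchAux.P12_case1 hβ1 hβsq hgold hEβ
        (pow_pos hβ0 _) hEs hX (pow_pos hβ0 _)
      refine ⟨L, ?_, hP1, hP2⟩
      rw [kappa, if_pos hsq, ← hA_def, hLR]
      have : ((L:ℕ):ℝ) + 1 > 0 := by positivity
      field_simp
    · -- β ≤ √2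
      push_neg at hsq
      set A := 1/(β-1) with hA_def
      have hsq2 : Real.sqrt 2 ^ 2 = 2 := Real.sq_sqrt (by norm_num)
      have hβsq : β^2 ≤ 2 := by nlinarith [Real.sqrt_nonneg 2, hsq]
      have hA1 : 1 ≤ A := by
        rw [hA_def, le_div_iff₀ hb1]; nlinarith
      have hA0 : (0:ℝ) < A := lt_of_lt_of_le one_pos hA1
      have hfl0 : 0 ≤ ⌊Real.logb β A⌋ := Int.floor_nonneg.2 (Real.logb_nonneg hβ1 hA1)
      set L : ℕ := (⌊Real.logb β A⌋).toNat with hL_def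
      have hLR : ((⌊Real.logb β A⌋ : ℤ):ℝ) = ((L:ℕ):ℝ) := by
        exact_mod_cast (Int.toNat_of_nonneg hfl0).symm
      have hE : A < β^(L+1) := by
        have h1 : Real.logb β A < ((L:ℝ) + 1) := by
          have h2 := Int.lt_floor_add_one (Real.logb β A)
          rw [hLR] at h2
          exact h2
        have h2 := (Real.logb_lt_iff_lt_rpow hβ1 hA0).1 h1
        rwa [show ((L:ℝ)+1) = ((L+1 : ℕ):ℝ) by push_cast; ring, Real.rpow_natCast] at h2
      have hEβ : β ≤ β^(L+1) := by
        calc β = β^1 := (pow_one β).symm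
          _ ≤ β^(L+1) := pow_le_pow_right₀ hβ1.le (by omega)
      have hEb : 1 < β^(L+1) * (β-1) := by
        rw [hA_def, div_lt_iff₀ hb1] at hE; linarith
      have hX : β^(2*L+1) * β = (β^(L+1))^2 := by
        rw [← pow_succ, ← pow_mul]
        congr 1
        omega
      obtain ⟨hP1, hP2⟩ := SwitchAux.P12_case2 hβ1 hβsq hgold hEβ
        (pow_pos hβ0 _) hEb hX (pow_pos hβ0 _)
      refine ⟨L, ?_, hP1, hP2⟩
      rw [kappa, if_neg (not_lt.2 hsq), ← hA_def, hLR]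
      have : ((L:ℕ):ℝ) + 1 > 0 := by positivity
      field_simp
  obtain ⟨L, hκ, P1, P2⟩ := hbridge
  constructor
  · rw [hκ]; positivity
  · intro x hx n _
    rw [hκ]
    rw [hiv] at hx
    exact SwitchAux.main hβ1 hgold L P1 P2 n x hx
end

section
/- Let β ∈ (1, (1+√5)/2) and m = 2. For every x ∈ (0, 1/(β−1)) there exist an integer ℓ ≥ 0 and digits (δ₁,…,δ_ℓ) ∈ {0,1}^ℓ such that for each 1 ≤ j ≤ ℓ the partial value β^j·x − Σ_{i=1}^{j} δ_i β^{j−i} lies in [0, 1/(β−1)], and the final value β^ℓ·x − Σ_{i=1}^{ℓ} δ_i β^{ℓ−i} lies in the switch region [1/β, 1/(β(β−1))]. -/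
open MeasureTheory Filter Set

/-- for β ∈ (1,(1+√5)/2), every x ∈ (0,1/(β-1)) reaches the switch region
[1/β, 1/(β(β-1))] after finitely many digit-shift steps, with all intermediate values
staying in I_β = [0,1/(β-1)]. (Here `δ i` is the digit δ_{i+1}.) -/
theorem reach_switch_region (β : ℝ) (hβ1 : 1 < β) (hβ2 : β < (1 + Real.sqrt 5) / 2) :
    ∀ x ∈ Ioo (0 : ℝ) (1 / (β - 1)),
      ∃ (ℓ : ℕ) (δ : ℕ → Fin 2),
        (∀ j : ℕ, 1 ≤ j → j ≤ ℓ →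
          β ^ j * x - ∑ i ∈ Finset.range j, ((δ i : ℕ) : ℝ) * β ^ (j - 1 - i) ∈
            Icc (0 : ℝ) (1 / (β - 1))) ∧
        β ^ ℓ * x - ∑ i ∈ Finset.range ℓ, ((δ i : ℕ) : ℝ) * β ^ (ℓ - 1 - i) ∈
          Icc (1 / β) (1 / (β * (β - 1))) := by

  intro x hx
  obtain ⟨hx0, hxu⟩ := hx
  have hb0 : (0:ℝ) < β := by linarith
  have hb1' : (0:ℝ) < β - 1 := by linarith
  have hβne1 : β ≠ 1 := by linarith
  have h5 : Real.sqrt 5 ^ 2 = 5 := Real.sq_sqrt (by norm_num)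
  have hsq : β ^ 2 < β + 1 := by nlinarith [Real.sqrt_nonneg 5]
  have h2 : β < 2 := by nlinarith
  have hub : (1:ℝ) ≤ 1 / (β - 1) := by
    rw [le_div_iff₀ hb1']; linarith
  have hbb0 : (0:ℝ) < β * (β - 1) := mul_pos hb0 hb1'
  have h1bb : (1:ℝ) ≤ 1 / (β * (β - 1)) := by
    rw [le_div_iff₀ hbb0]; nlinarith
  -- comparison 1/(β-1) - 1/β = 1/(β(β-1))
  have hdiff : 1 / (β - 1) - 1 / β = 1 / (β * (β - 1)) := by
    field_simp; ring
  rcases le_or_gt (1/β) x with hge | hlt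
  · rcases le_or_gt x (1 / (β * (β - 1))) with hle | hgt
    · -- already in the switch region
      refine ⟨0, fun _ => 0, ?_, ?_⟩
      · intro j hj1 hj2; omega
      · simp only [pow_zero, one_mul, Finset.range_zero, Finset.sum_empty, sub_zero]
        exact Set.mem_Icc.mpr ⟨hge, hle⟩
    · -- above the switch region: use digit 1
      set d : ℝ := 1 / (β - 1) - x with hd_def
      clear_value d
      have hd0 : 0 < d := by rw [hd_def]; linarith
      have hex : ∃ n, 1/β ≤ β ^ n * d := by
        obtain ⟨n, hn⟩ := pow_unbounded_of_one_lt ((1/β)/d) hβ1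
        exact ⟨n, by rw [div_lt_iff₀ hd0] at hn; linarith⟩
      set ℓ := Nat.find hex with hℓ_def
      have hspec : 1/β ≤ β ^ ℓ * d := Nat.find_spec hex
      have hmin : ∀ j < ℓ, β ^ j * d < 1/β := by
        intro j hj
        have := Nat.find_min hex hj
        push_neg at this
        exact this
      clear_value ℓ
      have hℓ1 : 1 ≤ ℓ := by
        rcases Nat.eq_zero_or_pos ℓ with h | h
        · exfalso
          have h0 : 1/β ≤ β ^ 0 * d := h ▸ hspec
          simp only [pow_zero, one_mul] at h0
          have hd' : d < 1/β := by rw [hd_def]; linarith [hdiff]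
          linarith
        · exact h
      -- value after j steps with all digits 1
      have hsum : ∀ j : ℕ, ∑ i ∈ Finset.range j, ((((fun _ => (1:Fin 2)) i : ℕ)) : ℝ) * β ^ (j - 1 - i)
          = (β ^ j - 1) / (β - 1) := by
        intro j
        have h1 : ∑ i ∈ Finset.range j, ((((fun _ => (1:Fin 2)) i : ℕ)) : ℝ) * β ^ (j - 1 - i)
            = ∑ i ∈ Finset.range j, β ^ (j - 1 - i) := by
          simp
        rw [h1, Finset.sum_range_reflect (fun i => β ^ i) j, geom_sum_eq hβne1]
      have hkey : ∀ j : ℕ, β ^ j * x - (β ^ j - 1) / (β - 1) = 1 / (β - 1) - β ^ j * d := by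
        intro j
        rw [hd_def]
        field_simp
        ring
      -- β^j d < 1 for 1 ≤ j ≤ ℓ
      have hlt1 : ∀ j : ℕ, 1 ≤ j → j ≤ ℓ → β ^ j * d < 1 := by
        intro j hj1 hj2
        cases j with
        | zero => omega
        | succ k =>
          have hk : β ^ k * d < 1/β := hmin k (by omega)
          have : β ^ (k+1) * d = (β ^ k * d) * β := by ring
          rw [this]
          calc (β ^ k * d) * β < (1/β) * β := by
                apply mul_lt_mul_of_pos_right hk hb0
            _ = 1 := by field_simp
      refine ⟨ℓ, fun _ => 1, ?_, ?_⟩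
      · intro j hj1 hj2
        rw [hsum j, hkey j]
        have hpos : 0 < β ^ j * d := mul_pos (pow_pos hb0 j) hd0
        have h1 : β ^ j * d < 1 := hlt1 j hj1 hj2
        constructor
        · linarith
        · linarith
      · rw [hsum ℓ, hkey ℓ]
        have h1 : β ^ ℓ * d < 1 := hlt1 ℓ hℓ1 le_rfl
        constructor
        · -- 1/β ≤ 1/(β-1) - β^ℓ d : since β^ℓ d < 1 and 1/(β-1) - 1 ≥ 1/β
          have he : 1/(β-1) - 1 = (2-β)/(β-1) := by field_simp; ring
          have : 1/β ≤ 1/(β-1) - 1 := by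
            rw [he, div_le_div_iff₀ hb0 hb1']
            nlinarith
          linarith
        · -- 1/(β-1) - β^ℓ d ≤ 1/(β(β-1)) since β^ℓ d ≥ 1/β
          linarith [hdiff, hspec]
  · -- below the switch region: use digit 0
    have hex : ∃ n, 1/β ≤ β ^ n * x := by
      obtain ⟨n, hn⟩ := pow_unbounded_of_one_lt ((1/β)/x) hβ1
      exact ⟨n, by rw [div_lt_iff₀ hx0] at hn; linarith⟩
    set ℓ := Nat.find hex with hℓ_def
    have hspec : 1/β ≤ β ^ ℓ * x := Nat.find_spec hex
    have hmin : ∀ j < ℓ, β ^ j * x < 1/β := by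
      intro j hj
      have := Nat.find_min hex hj
      push_neg at this
      exact this
    clear_value ℓ
    have hℓ1 : 1 ≤ ℓ := by
      rcases Nat.eq_zero_or_pos ℓ with h | h
      · exfalso
        have h0 : 1/β ≤ β ^ 0 * x := h ▸ hspec
        simp only [pow_zero, one_mul] at h0
        linarith
      · exact h
    have hlt1 : ∀ j : ℕ, 1 ≤ j → j ≤ ℓ → β ^ j * x < 1 := by
      intro j hj1 hj2
      cases j with
      | zero => omega
      | succ k =>
        have hk : β ^ k * x < 1/β := hmin k (by omega)
        have : β ^ (k+1) * x = (β ^ k * x) * β := by ring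
        rw [this]
        calc (β ^ k * x) * β < (1/β) * β := by
              apply mul_lt_mul_of_pos_right hk hb0
          _ = 1 := by field_simp
    refine ⟨ℓ, fun _ => 0, ?_, ?_⟩
    · intro j hj1 hj2
      simp only [Fin.val_zero, Nat.cast_zero, zero_mul, Finset.sum_const_zero, sub_zero]
      have hpos : 0 < β ^ j * x := mul_pos (pow_pos hb0 j) hx0
      have h1 : β ^ j * x < 1 := hlt1 j hj1 hj2
      exact ⟨le_of_lt hpos, by linarith⟩
    · simp only [Fin.val_zero, Nat.cast_zero, zero_mul, Finset.sum_const_zero, sub_zero]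
      have h1 : β ^ ℓ * x < 1 := hlt1 ℓ hℓ1 le_rfl
      exact ⟨hspec, by linarith⟩
end
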